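/- arXiv:1907.11362 — 3 statements merged into one kernel-verified Lean document; each statement's English description precedes it below -/
import Mathlib

section
/- Let x₁, x₂, …, x_t be i.i.d. random vectors in ℝ^d with ‖x_τ‖_∞ ≤ 1 almost surely for all τ. Let Σ = E[x_τ x_τᵀ] and Σ̂_t = (1/t)·Σ_{τ=1}^t x_τ x_τᵀ. Let β ∈ ℝ^d with ‖β‖₀ = s₀, suppose Σ ∈ C(supp(β), φ) for some φ > 0, and set c = min(0.5, φ²/(256·s₀)). Then for every t ≥ (3/c²)·log d, one has P[ Σ̂_t ∈ C(supp(β), φ/√2) ] ≥ 1 − exp(−c²·t). -/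
open MeasureTheory ProbabilityTheory Real Finset Matrix

noncomputable section

/-- The L¹ norm of a vector in `ℝ^d`. -/
def l1Norm {d : ℕ} (v : Fin d → ℝ) : ℝ := ∑ i, |v i|

/-- The number of nonzero entries of a vector (the "L⁰ norm" `‖·‖₀`). -/
def l0Norm {d : ℕ} (v : Fin d → ℝ) : ℕ := (Finset.univ.filter (fun i => v i ≠ 0)).card

/-- The support of a vector, as a `Finset` of indices. -/
def spt {d : ℕ} (v : Fin d → ℝ) : Finset (Fin d) := Finset.univ.filter (fun i => v i ≠ 0)

/-- The compatibility set `C(I, φ)`: the set of `d × d` real matrices `M` such that for every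
`v ∈ ℝ^d` with `‖v_{Iᶜ}‖₁ ≤ 3 ‖v_I‖₁` one has `‖v_I‖₁² ≤ |I| (vᵀ M v) / φ²`. -/
def compatSet {d : ℕ} (I : Finset (Fin d)) (φ : ℝ) : Set (Matrix (Fin d) (Fin d) ℝ) :=
  {M | ∀ v : Fin d → ℝ,
    (∑ i ∈ Iᶜ, abs (v i)) ≤ 3 * (∑ i ∈ I, abs (v i)) →
    (∑ i ∈ I, abs (v i)) ^ 2 ≤ (I.card : ℝ) * (v ⬝ᵥ M.mulVec v) / φ ^ 2}


section Aux

variable {Ω : Type*} [MeasureSpace Ω] [IsProbabilityMeasure (ℙ : Measure Ω)]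

lemma aux_exp_interp {B y l : ℝ} (hB : 0 < B) (hy : |y| ≤ B) :
    exp (l * y) ≤ (B - y) / (2 * B) * exp (l * -B) + (B + y) / (2 * B) * exp (l * B) := by
  obtain ⟨hy1, hy2⟩ := abs_le.mp hy
  have ha : 0 ≤ (B - y) / (2 * B) := div_nonneg (by linarith) (by linarith)
  have hb : 0 ≤ (B + y) / (2 * B) := div_nonneg (by linarith) (by linarith)
  have hab : (B - y) / (2 * B) + (B + y) / (2 * B) = 1 := by
    field_simp; ring
  have h := convexOn_exp.2 (Set.mem_univ (l * -B)) (Set.mem_univ (l * B)) ha hb hab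
  simp only [smul_eq_mul] at h
  have harg : (B - y) / (2 * B) * (l * -B) + (B + y) / (2 * B) * (l * B) = l * y := by
    have h2B : (2 * B) ≠ 0 := by positivity
    field_simp
    ring
  rw [harg] at h
  exact h

lemma aux_mgf_le {Y : Ω → ℝ} (hY : Measurable Y) {B : ℝ} (hB : 0 < B)
    (hbdd : ∀ᵐ ω ∂(ℙ : Measure Ω), |Y ω| ≤ B)
    (hmean : ∫ ω, Y ω ∂(ℙ : Measure Ω) = 0) (l : ℝ) :
    mgf Y ℙ l ≤ exp (l ^ 2 * B ^ 2 / 2) := by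
  have hintY : Integrable Y ℙ := by
    refine Integrable.mono' (integrable_const B) hY.aestronglyMeasurable ?_
    simpa [Real.norm_eq_abs] using hbdd
  have hintexp : Integrable (fun ω => exp (l * Y ω)) ℙ := by
    refine Integrable.mono' (integrable_const (exp (|l| * B)))
      ((hY.const_mul l).exp).aestronglyMeasurable ?_
    filter_upwards [hbdd] with ω h
    rw [Real.norm_eq_abs, abs_of_pos (exp_pos _)]
    refine exp_le_exp.2 (le_trans (le_abs_self _) ?_)
    rw [abs_mul]
    exact mul_le_mul_of_nonneg_left h (abs_nonneg _)
  set c1 : ℝ := (exp (l * -B) + exp (l * B)) / 2 with hc1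
  set c2 : ℝ := (exp (l * B) - exp (l * -B)) / (2 * B) with hc2
  have key : mgf Y ℙ l ≤ cosh (l * B) := by
    have hle : ∀ᵐ ω ∂(ℙ : Measure Ω), exp (l * Y ω) ≤ c1 + c2 * Y ω := by
      filter_upwards [hbdd] with ω h
      refine le_trans (aux_exp_interp hB h) (le_of_eq ?_)
      rw [hc1, hc2]
      field_simp
      ring
    have hR : Integrable (fun ω => c1 + c2 * Y ω) ℙ :=
      (integrable_const _).add (hintY.const_mul _)
    calc mgf Y ℙ l = ∫ ω, exp (l * Y ω) ∂ℙ := rfl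
      _ ≤ ∫ ω, (c1 + c2 * Y ω) ∂ℙ := integral_mono_ae hintexp hR hle
      _ = c1 + c2 * ∫ ω, Y ω ∂ℙ := by
          rw [integral_add (integrable_const _) (hintY.const_mul _), integral_const,
            integral_const_mul]
          simp
      _ = cosh (l * B) := by rw [hmean, Real.cosh_eq, hc1]; ring_nf
  calc mgf Y ℙ l ≤ cosh (l * B) := key
    _ ≤ exp ((l * B) ^ 2 / 2) := cosh_le_exp_half_sq _
    _ = exp (l ^ 2 * B ^ 2 / 2) := by rw [mul_pow]

lemma aux_chernoff {t : ℕ} (ht : 0 < t) (Y : Fin t → Ω → ℝ) (hmeas : ∀ τ, Measurable (Y τ))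
    (hindep : iIndepFun Y ℙ)
    {B : ℝ} (hB : 0 < B) (hbdd : ∀ τ, ∀ᵐ ω ∂(ℙ : Measure Ω), |Y τ ω| ≤ B)
    (hmean : ∀ τ, ∫ ω, Y τ ω ∂(ℙ : Measure Ω) = 0) {a : ℝ} (ha : 0 ≤ a) :
    ℙ {ω | a ≤ ∑ τ, Y τ ω} ≤ ENNReal.ofReal (exp (-(a ^ 2) / (2 * t * B ^ 2))) := by
  have ht' : (0:ℝ) < t := by exact_mod_cast ht
  set l : ℝ := a / (t * B ^ 2) with hl
  have hl0 : 0 ≤ l := div_nonneg ha (by positivity)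
  have hfun : (∑ τ, Y τ) = fun ω => ∑ τ, Y τ ω := by funext ω; simp
  have hSmeas : Measurable (fun ω => ∑ τ, Y τ ω) :=
    Finset.measurable_sum Finset.univ fun τ _ => hmeas τ
  have hbdd' : ∀ᵐ ω ∂(ℙ : Measure Ω), ∀ τ, |Y τ ω| ≤ B := ae_all_iff.mpr hbdd
  have hintexp : Integrable (fun ω => exp (l * (∑ τ, Y τ) ω)) ℙ := by
    rw [hfun]
    refine Integrable.mono' (integrable_const (exp (|l| * (t * B))))
      ((hSmeas.const_mul l).exp).aestronglyMeasurable ?_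
    filter_upwards [hbdd'] with ω h
    rw [Real.norm_eq_abs, abs_of_pos (exp_pos _)]
    refine exp_le_exp.2 (le_trans (le_abs_self _) ?_)
    rw [abs_mul]
    refine mul_le_mul_of_nonneg_left ?_ (abs_nonneg _)
    calc |∑ τ, Y τ ω| ≤ ∑ τ, |Y τ ω| := Finset.abs_sum_le_sum_abs _ _
      _ ≤ ∑ _τ : Fin t, B := Finset.sum_le_sum fun τ _ => h τ
      _ = t * B := by simp [mul_comm]
  have h1 := measure_ge_le_exp_mul_mgf (μ := ℙ) (X := ∑ τ, Y τ) a hl0 hintexp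
  have h2 : mgf (∑ τ, Y τ) ℙ l = ∏ τ, mgf (Y τ) ℙ l := hindep.mgf_sum hmeas Finset.univ
  have h3 : ∏ τ, mgf (Y τ) ℙ l ≤ exp (t * (l ^ 2 * B ^ 2 / 2)) := by
    calc ∏ τ, mgf (Y τ) ℙ l ≤ ∏ _τ : Fin t, exp (l ^ 2 * B ^ 2 / 2) :=
        Finset.prod_le_prod (fun τ _ => mgf_nonneg)
          (fun τ _ => aux_mgf_le (hmeas τ) hB (hbdd τ) (hmean τ) l)
      _ = exp (t * (l ^ 2 * B ^ 2 / 2)) := by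
          rw [Finset.prod_const, Finset.card_univ, Fintype.card_fin, ← Real.exp_nat_mul]
  have h4 : exp (-l * a) * mgf (∑ τ, Y τ) ℙ l ≤ exp (-(a ^ 2) / (2 * t * B ^ 2)) := by
    rw [h2]
    calc exp (-l * a) * ∏ τ, mgf (Y τ) ℙ l
        ≤ exp (-l * a) * exp (t * (l ^ 2 * B ^ 2 / 2)) :=
          mul_le_mul_of_nonneg_left h3 (exp_pos _).le
      _ = exp (-(a ^ 2) / (2 * t * B ^ 2)) := by
          rw [← Real.exp_add]
          congr 1
          rw [hl]
          field_simp
          ring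
  have h5 : {ω | a ≤ ∑ τ, Y τ ω} = {ω | a ≤ (∑ τ, Y τ) ω} := by
    ext ω; simp
  rw [h5, ← ENNReal.ofReal_toReal (measure_ne_top ℙ _)]
  exact ENNReal.ofReal_le_ofReal (h1.trans h4)


lemma aux_compat_perturb {d : ℕ} (I : Finset (Fin d)) {s₀ : ℕ} (hcard : I.card = s₀)
    (hs : 0 < s₀) {φ δ : ℝ} (hφ : 0 < φ) (hδ0 : 0 ≤ δ) (hδ : 16 * δ ≤ φ ^ 2 / (2 * s₀))
    {Sig M : Matrix (Fin d) (Fin d) ℝ} (hSig : Sig ∈ compatSet I φ)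
    (hent : ∀ i j, |M i j - Sig i j| ≤ δ) : M ∈ compatSet I (φ / Real.sqrt 2) := by
  intro v hv
  have hs' : (0:ℝ) < s₀ := by exact_mod_cast hs
  have hL0 : 0 ≤ ∑ i ∈ I, |v i| := Finset.sum_nonneg fun i _ => abs_nonneg _
  set L : ℝ := ∑ i ∈ I, |v i| with hLdef
  have h1 := hSig v hv
  rw [hcard] at h1 ⊢
  -- quadratic form difference bound
  have hdiff : v ⬝ᵥ M.mulVec v - v ⬝ᵥ Sig.mulVec v
      = ∑ i, ∑ j, v i * v j * (M i j - Sig i j) := by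
    simp only [dotProduct, Matrix.mulVec, dotProduct, Finset.mul_sum, ← Finset.sum_sub_distrib]
    congr 1; funext i; congr 1; funext j; ring
  have hT : (∑ i, |v i|) ≤ 4 * L := by
    have := Finset.sum_add_sum_compl I (fun i => |v i|)
    linarith [hv]
  have hT0 : 0 ≤ ∑ i, |v i| := Finset.sum_nonneg fun i _ => abs_nonneg _
  have hq : |v ⬝ᵥ M.mulVec v - v ⬝ᵥ Sig.mulVec v| ≤ δ * ((∑ i, |v i|) * (∑ i, |v i|)) := by
    rw [hdiff]
    calc |∑ i, ∑ j, v i * v j * (M i j - Sig i j)|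
        ≤ ∑ i, |∑ j, v i * v j * (M i j - Sig i j)| := Finset.abs_sum_le_sum_abs _ _
      _ ≤ ∑ i, ∑ j, |v i * v j * (M i j - Sig i j)| :=
          Finset.sum_le_sum fun i _ => Finset.abs_sum_le_sum_abs _ _
      _ ≤ ∑ i, ∑ j, |v i| * |v j| * δ := by
          refine Finset.sum_le_sum fun i _ => Finset.sum_le_sum fun j _ => ?_
          rw [abs_mul, abs_mul]
          exact mul_le_mul_of_nonneg_left (hent i j)
            (mul_nonneg (abs_nonneg _) (abs_nonneg _))
      _ = δ * ((∑ i, |v i|) * (∑ i, |v i|)) := by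
          rw [Finset.sum_mul_sum, Finset.mul_sum]
          refine Finset.sum_congr rfl fun i _ => ?_
          rw [Finset.mul_sum]
          exact Finset.sum_congr rfl fun j _ => by ring
  -- from compatibility of Sig
  have hQS : φ ^ 2 * L ^ 2 ≤ s₀ * (v ⬝ᵥ Sig.mulVec v) := by
    have hφ2 : (0:ℝ) < φ ^ 2 := by positivity
    rw [le_div_iff₀ hφ2] at h1
    linarith [h1]
  have hδs : 16 * δ * s₀ ≤ φ ^ 2 / 2 := by
    rw [le_div_iff₀ (by positivity : (0:ℝ) < 2 * (s₀:ℝ))] at hδ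
    linarith
  have habs := abs_le.mp hq
  have hQM : φ ^ 2 / 2 * L ^ 2 ≤ s₀ * (v ⬝ᵥ M.mulVec v) := by
    have h16 : δ * ((∑ i, |v i|) * (∑ i, |v i|)) ≤ 16 * δ * L ^ 2 := by
      have : (∑ i, |v i|) * (∑ i, |v i|) ≤ (4 * L) * (4 * L) :=
        mul_le_mul hT hT hT0 (by linarith)
      nlinarith
    nlinarith [habs.1, hs']
  have hsq2 : (φ / Real.sqrt 2) ^ 2 = φ ^ 2 / 2 := by
    rw [div_pow, Real.sq_sqrt (by norm_num : (0:ℝ) ≤ 2)]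
  rw [hsq2, le_div_iff₀ (by positivity : (0:ℝ) < φ ^ 2 / 2)]
  linarith [hQM]

lemma aux_real_bound {dd : ℕ} (hd : 2 ≤ dd) {c tt : ℝ} (hc : 0 < c) (htt : 0 < tt)
    (hlog : 3 * Real.log dd ≤ c ^ 2 * tt) :
    (dd : ℝ) * dd * (2 * exp (-(8 * (c ^ 2 * tt)))) ≤ exp (-(c ^ 2) * tt) := by
  have hd0 : (0:ℝ) < dd := by positivity
  have h2d : (2:ℝ) ≤ dd := by exact_mod_cast hd
  have hlog0 : 0 ≤ Real.log dd := Real.log_nonneg (by linarith)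
  have h2 : exp ((21:ℕ) * Real.log dd) = (dd:ℝ) ^ (21:ℕ) := by
    rw [Real.exp_nat_mul, Real.exp_log hd0]
  have h19 : (2:ℝ) ≤ (dd:ℝ) ^ (19:ℕ) := by
    calc (2:ℝ) ≤ 2 ^ (19:ℕ) := by norm_num
      _ ≤ (dd:ℝ) ^ (19:ℕ) := pow_le_pow_left₀ (by norm_num) h2d 19
  have h3 : (dd:ℝ) * dd * 2 ≤ (dd:ℝ) ^ (21:ℕ) := by
    calc (dd:ℝ) * dd * 2 ≤ (dd:ℝ) * dd * (dd:ℝ) ^ (19:ℕ) := by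
          refine mul_le_mul_of_nonneg_left h19 (by positivity)
      _ = (dd:ℝ) ^ (21:ℕ) := by ring
  have h4 : (dd:ℝ) * dd * 2 ≤ exp (7 * (c ^ 2 * tt)) := by
    refine h3.trans ?_
    rw [← h2]
    exact exp_le_exp.2 (by push_cast; linarith)
  calc (dd : ℝ) * dd * (2 * exp (-(8 * (c ^ 2 * tt))))
      = ((dd:ℝ) * dd * 2) * exp (-(8 * (c ^ 2 * tt))) := by ring
    _ ≤ exp (7 * (c ^ 2 * tt)) * exp (-(8 * (c ^ 2 * tt))) :=
        mul_le_mul_of_nonneg_right h4 (exp_pos _).le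
    _ = exp (-(c ^ 2) * tt) := by rw [← Real.exp_add]; congr 1; ring

lemma aux_final {Ω : Type*} [MeasureSpace Ω] [IsProbabilityMeasure (ℙ : Measure Ω)]
    {A T : Set Ω} (hAT : A ⊆ T) {ε : ℝ} (hε0 : 0 ≤ ε)
    (hε : ℙ Aᶜ ≤ ENNReal.ofReal ε) : ENNReal.ofReal (1 - ε) ≤ ℙ T := by
  have h1 : (1:ENNReal) ≤ ℙ T + ENNReal.ofReal ε := by
    have h := measure_union_le (μ := (ℙ : Measure Ω)) A Aᶜ
    rw [Set.union_compl_self, measure_univ] at h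
    exact h.trans (add_le_add (measure_mono hAT) hε)
  have h2 : ENNReal.ofReal (1 - ε) ≤ 1 - ENNReal.ofReal ε := by
    rw [← ENNReal.ofReal_one]
    exact (ENNReal.ofReal_sub 1 hε0).le.trans (by rw [ENNReal.ofReal_one])
  exact h2.trans (tsub_le_iff_right.mpr h1)

end Aux

set_option maxHeartbeats 1000000 in
/-- **Lemma 3.3 (Bastani–Bayati, Lemma EC.6): the empirical Gram matrix of i.i.d. bounded
vectors inherits compatibility.** If `x₁, …, x_t` are i.i.d. random vectors in `ℝ^d` with
`‖x_τ‖_∞ ≤ 1` a.s., `Σ = E[x_τ x_τᵀ] ∈ C(supp β, φ)` with `‖β‖₀ = s₀`, and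
`c = min(0.5, φ²/(256 s₀))`, then for `t ≥ (3/c²) log d`,
`P[Σ̂_t ∈ C(supp β, φ/√2)] ≥ 1 - exp(-c² t)` where `Σ̂_t = (1/t) Σ_τ x_τ x_τᵀ`. -/
theorem stmt2
    {Ω : Type*} [MeasureSpace Ω] [IsProbabilityMeasure (ℙ : Measure Ω)]
    (d t : ℕ) (hd : 0 < d) (ht : 0 < t)
    (x : Fin t → Ω → Fin d → ℝ) (hxmeas : ∀ τ, Measurable (x τ))
    (hxindep : iIndepFun x ℙ)
    (hxident : ∀ τ τ' : Fin t, Measure.map (x τ) ℙ = Measure.map (x τ') ℙ)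
    (hxbdd : ∀ τ : Fin t, ∀ᵐ ω ∂(ℙ : Measure Ω), ∀ i, |x τ ω i| ≤ 1)
    (β : Fin d → ℝ) (s₀ : ℕ) (hs₀ : l0Norm β = s₀)
    (Sig : Matrix (Fin d) (Fin d) ℝ)
    (hSig : ∀ τ : Fin t, ∀ i j, Sig i j = ∫ ω, x τ ω i * x τ ω j ∂(ℙ : Measure Ω))
    (φ : ℝ) (hφ : 0 < φ)
    (hcompat : Sig ∈ compatSet (spt β) φ)
    (c : ℝ) (hc : c = min 0.5 (φ ^ 2 / (256 * s₀)))
    (htlb : (3 / c ^ 2) * Real.log d ≤ (t : ℝ)) :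
    ENNReal.ofReal (1 - Real.exp (-(c ^ 2) * t)) ≤
      ℙ {ω | (fun i j => (1 / t : ℝ) * ∑ τ, x τ ω i * x τ ω j)
          ∈ compatSet (spt β) (φ / Real.sqrt 2)} := by
  classical
  have ht' : (0:ℝ) < t := by exact_mod_cast ht
  rcases Nat.eq_zero_or_pos s₀ with hs00 | hs0
  · subst hs00
    have hc0 : c = 0 := by rw [hc]; push_cast; norm_num
    rw [hc0]
    norm_num
  -- shared facts
  have τ0 : Fin t := ⟨0, ht⟩
  have hxbdd' : ∀ τ, ∀ᵐ ω ∂(ℙ : Measure Ω), ∀ i j, |x τ ω i * x τ ω j| ≤ 1 := by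
    intro τ; filter_upwards [hxbdd τ] with ω h i j
    rw [abs_mul]; exact mul_le_one₀ (h i) (abs_nonneg _) (h j)
  have hmeasxx : ∀ τ (i j : Fin d), Measurable fun ω => x τ ω i * x τ ω j := fun τ i j =>
    ((measurable_pi_apply i).comp (hxmeas τ)).mul ((measurable_pi_apply j).comp (hxmeas τ))
  have hintxx : ∀ τ (i j : Fin d), Integrable (fun ω => x τ ω i * x τ ω j) ℙ := by
    intro τ i j
    refine Integrable.mono' (integrable_const 1) (hmeasxx τ i j).aestronglyMeasurable ?_
    filter_upwards [hxbdd' τ] with ω h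
    simpa only [Real.norm_eq_abs] using h i j
  have hSbd : ∀ i j, |Sig i j| ≤ 1 := by
    intro i j
    rw [hSig τ0 i j]
    have h := norm_integral_le_of_norm_le_const (μ := (ℙ : Measure Ω))
      (f := fun ω => x τ0 ω i * x τ0 ω j) (C := 1) ?_
    · simpa [Real.norm_eq_abs] using h
    · filter_upwards [hxbdd' τ0] with ω h
      simpa only [Real.norm_eq_abs] using h i j
  have hmean : ∀ τ (i j : Fin d),
      ∫ ω, (x τ ω i * x τ ω j - Sig i j) ∂(ℙ : Measure Ω) = 0 := by
    intro τ i j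
    rw [integral_sub (hintxx τ i j) (integrable_const _), integral_const, ← hSig τ i j]
    simp
  have hmean' : ∀ τ (i j : Fin d),
      ∫ ω, (Sig i j - x τ ω i * x τ ω j) ∂(ℙ : Measure Ω) = 0 := by
    intro τ i j
    rw [integral_sub (integrable_const _) (hintxx τ i j), integral_const, ← hSig τ i j]
    simp
  have hbdd2 : ∀ (i j : Fin d) τ, ∀ᵐ ω ∂(ℙ : Measure Ω),
      |x τ ω i * x τ ω j - Sig i j| ≤ 2 := by
    intro i j τ; filter_upwards [hxbdd' τ] with ω h
    have h1 : |x τ ω i * x τ ω j| ≤ 1 := h i j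
    have h2 := hSbd i j
    calc |x τ ω i * x τ ω j - Sig i j| ≤ |x τ ω i * x τ ω j| + |Sig i j| := abs_sub _ _
      _ ≤ 2 := by linarith
  have hbdd2' : ∀ (i j : Fin d) τ, ∀ᵐ ω ∂(ℙ : Measure Ω),
      |Sig i j - x τ ω i * x τ ω j| ≤ 2 := by
    intro i j τ; filter_upwards [hbdd2 i j τ] with ω h
    rwa [abs_sub_comm]
  have hindepU : ∀ (i j : Fin d), iIndepFun
      (fun τ ω => x τ ω i * x τ ω j - Sig i j) ℙ := by
    intro i j
    have hg : Measurable (fun v : Fin d → ℝ => v i * v j - Sig i j) :=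
      ((measurable_pi_apply i).mul (measurable_pi_apply j)).sub measurable_const
    exact hxindep.comp _ (fun τ => hg)
  have hindepL : ∀ (i j : Fin d), iIndepFun
      (fun τ ω => Sig i j - x τ ω i * x τ ω j) ℙ := by
    intro i j
    have hg : Measurable (fun v : Fin d → ℝ => Sig i j - v i * v j) :=
      measurable_const.sub ((measurable_pi_apply i).mul (measurable_pi_apply j))
    exact hxindep.comp _ (fun τ => hg)
  have hcardspt : (spt β).card = s₀ := hs₀
  rcases lt_or_ge d 2 with hdlt | hd2
  -- ===== case d = 1 =====
  · have hd1 : d = 1 := by omega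
    subst hd1
    have hs1 : s₀ = 1 := by
      have hle : (spt β).card ≤ 1 := by
        have := Finset.card_le_univ (spt β)
        simpa using this
      omega
    have hI : spt β = Finset.univ := Finset.eq_univ_of_card _ (by rw [hcardspt, hs1]; simp)
    have hφ2 : (0:ℝ) < φ ^ 2 := by positivity
    have hSig00 : φ ^ 2 ≤ Sig 0 0 := by
      have h := hcompat (fun _ => 1) (by rw [hI, Finset.compl_univ]; simp)
      rw [hI] at h
      simp [Matrix.mulVec, dotProduct, Fin.sum_univ_one] at h
      rw [le_div_iff₀ hφ2] at h
      linarith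
    have hc0 : 0 ≤ c := by
      rw [hc]; exact le_min (by norm_num) (by positivity)
    have hcle : c ≤ φ ^ 2 / 256 := by
      rw [hc, hs1]
      refine le_trans (min_le_right _ _) (le_of_eq ?_)
      norm_num
    have hsq2 : ((φ : ℝ) / Real.sqrt 2) ^ 2 = φ ^ 2 / 2 := by
      rw [div_pow, Real.sq_sqrt (by norm_num : (0:ℝ) ≤ 2)]
    have hAT : {ω : Ω | φ ^ 2 / 2 ≤ (1 / t : ℝ) * ∑ τ, x τ ω 0 * x τ ω 0} ⊆
        {ω : Ω | (fun i j => (1 / t : ℝ) * ∑ τ, x τ ω i * x τ ω j)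
          ∈ compatSet (spt β) (φ / Real.sqrt 2)} := by
      intro ω hω
      rw [Set.mem_setOf_eq] at hω
      rw [Set.mem_setOf_eq, hI]
      intro v _
      simp only [Matrix.mulVec, dotProduct, Fin.sum_univ_one, Finset.card_univ,
        Fintype.card_fin, Nat.cast_one]
      rw [hsq2, sq_abs, le_div_iff₀ (by positivity : (0:ℝ) < φ ^ 2 / 2)]
      nlinarith [sq_nonneg (v 0), mul_nonneg (sub_nonneg.2 hω) (sq_nonneg (v 0))]
    refine aux_final hAT (exp_nonneg _) ?_
    have hch := aux_chernoff (Ω := Ω) ht (fun τ ω => Sig 0 0 - x τ ω 0 * x τ ω 0)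
      (fun τ => measurable_const.sub (hmeasxx τ 0 0)) (hindepL 0 0)
      (B := 1) one_pos
      (by
        intro τ
        filter_upwards [hxbdd τ] with ω h
        have hx := abs_le.mp (h 0)
        have h2 := hSbd 0 0
        have h2' := abs_le.mp h2
        rw [abs_le]
        constructor <;> nlinarith [hx.1, hx.2])
      (fun τ => hmean' τ 0 0) (a := (t : ℝ) * (φ ^ 2 / 2)) (by positivity)
    have hsub : {ω : Ω | φ ^ 2 / 2 ≤ (1 / t : ℝ) * ∑ τ, x τ ω 0 * x τ ω 0}ᶜ ⊆
        {ω : Ω | (t : ℝ) * (φ ^ 2 / 2) ≤ ∑ τ, (Sig 0 0 - x τ ω 0 * x τ ω 0)} := by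
      intro ω hω
      rw [Set.mem_compl_iff, Set.mem_setOf_eq, not_le] at hω
      rw [Set.mem_setOf_eq]
      have hsplit : ∑ τ, (Sig 0 0 - x τ ω 0 * x τ ω 0)
          = (t : ℝ) * Sig 0 0 - ∑ τ, x τ ω 0 * x τ ω 0 := by
        rw [Finset.sum_sub_distrib, Finset.sum_const, Finset.card_univ, Fintype.card_fin,
          nsmul_eq_mul]
      rw [hsplit]
      have h2 : ∑ τ, x τ ω 0 * x τ ω 0 < (t : ℝ) * (φ ^ 2 / 2) := by
        have hh := mul_lt_mul_of_pos_left hω ht'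
        rwa [show (t : ℝ) * ((1 / t : ℝ) * ∑ τ, x τ ω 0 * x τ ω 0)
          = ∑ τ, x τ ω 0 * x τ ω 0 from by field_simp] at hh
      nlinarith [mul_le_mul_of_nonneg_left hSig00 ht'.le]
    refine le_trans (measure_mono hsub) (le_trans hch ?_)
    apply ENNReal.ofReal_le_ofReal
    apply exp_le_exp.2
    have heq : -(((t : ℝ) * (φ ^ 2 / 2)) ^ 2) / (2 * (t : ℝ) * 1 ^ 2)
        = -((t : ℝ) * (φ ^ 4 / 8)) := by
      field_simp; ring
    rw [heq]
    have h6 : c ^ 2 ≤ φ ^ 4 / 8 := by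
      nlinarith [mul_le_mul hcle hcle hc0 (by positivity : (0:ℝ) ≤ φ ^ 2 / 256), sq_nonneg φ]
    have h8 : c ^ 2 * t ≤ (t : ℝ) * (φ ^ 4 / 8) := by
      nlinarith [mul_le_mul_of_nonneg_left h6 ht'.le]
    linarith
  -- ===== case d ≥ 2 =====
  · have hc0 : 0 < c := by
      rw [hc]; exact lt_min (by norm_num) (by positivity)
    have hs' : (0:ℝ) < s₀ := by exact_mod_cast hs0
    set δ : ℝ := φ ^ 2 / (32 * s₀) with hδdef
    have hδ0 : 0 < δ := by rw [hδdef]; positivity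
    have h1c : c ≤ φ ^ 2 / (256 * s₀) := by rw [hc]; exact min_le_right _ _
    have h8c : 8 * c ≤ δ := by
      rw [hδdef, show φ ^ 2 / (32 * (s₀:ℝ)) = 8 * (φ ^ 2 / (256 * s₀)) from by
        field_simp; ring]
      linarith
    have hδ16 : 16 * δ ≤ φ ^ 2 / (2 * s₀) := by
      rw [hδdef]
      refine le_of_eq ?_
      field_simp
      ring
    have hAT : {ω : Ω | ∀ i j, |(1 / t : ℝ) * (∑ τ, x τ ω i * x τ ω j) - Sig i j| ≤ δ} ⊆
        {ω : Ω | (fun i j => (1 / t : ℝ) * ∑ τ, x τ ω i * x τ ω j)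
          ∈ compatSet (spt β) (φ / Real.sqrt 2)} := by
      intro ω hω
      rw [Set.mem_setOf_eq] at hω ⊢
      exact aux_compat_perturb (spt β) hcardspt hs0 hφ hδ0.le hδ16 hcompat
        (fun i j => hω i j)
    refine aux_final hAT (exp_nonneg _) ?_
    set e₀ : ℝ := exp (-(((t:ℝ) * δ) ^ 2) / (2 * (t:ℝ) * 2 ^ 2)) with he₀
    have hU : ∀ i j : Fin d,
        ℙ {ω : Ω | (t:ℝ) * δ ≤ ∑ τ, (x τ ω i * x τ ω j - Sig i j)} ≤ ENNReal.ofReal e₀ :=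
      fun i j => aux_chernoff ht _ (fun τ => (hmeasxx τ i j).sub measurable_const)
        (hindepU i j) (by norm_num : (0:ℝ) < 2) (hbdd2 i j) (fun τ => hmean τ i j)
        (by positivity)
    have hL : ∀ i j : Fin d,
        ℙ {ω : Ω | (t:ℝ) * δ ≤ ∑ τ, (Sig i j - x τ ω i * x τ ω j)} ≤ ENNReal.ofReal e₀ :=
      fun i j => aux_chernoff ht _ (fun τ => measurable_const.sub (hmeasxx τ i j))
        (hindepL i j) (by norm_num : (0:ℝ) < 2) (hbdd2' i j) (fun τ => hmean' τ i j)
        (by positivity)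
    have hsub : {ω : Ω | ∀ i j, |(1 / t : ℝ) * (∑ τ, x τ ω i * x τ ω j) - Sig i j| ≤ δ}ᶜ ⊆
        ⋃ p : Fin d × Fin d,
          ({ω : Ω | (t:ℝ) * δ ≤ ∑ τ, (x τ ω p.1 * x τ ω p.2 - Sig p.1 p.2)} ∪
           {ω : Ω | (t:ℝ) * δ ≤ ∑ τ, (Sig p.1 p.2 - x τ ω p.1 * x τ ω p.2)}) := by
      intro ω hω
      rw [Set.mem_compl_iff, Set.mem_setOf_eq] at hω
      push_neg at hω
      obtain ⟨i, j, hij⟩ := hω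
      refine Set.mem_iUnion.2 ⟨(i, j), ?_⟩
      have hsplit1 : ∑ τ, (x τ ω i * x τ ω j - Sig i j)
          = (∑ τ, x τ ω i * x τ ω j) - (t:ℝ) * Sig i j := by
        rw [Finset.sum_sub_distrib, Finset.sum_const, Finset.card_univ, Fintype.card_fin,
          nsmul_eq_mul]
      have hsplit2 : ∑ τ, (Sig i j - x τ ω i * x τ ω j)
          = (t:ℝ) * Sig i j - ∑ τ, x τ ω i * x τ ω j := by
        rw [Finset.sum_sub_distrib, Finset.sum_const, Finset.card_univ, Fintype.card_fin,
          nsmul_eq_mul]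
      rcases lt_abs.mp hij with h | h
      · left
        rw [Set.mem_setOf_eq, hsplit1]
        have hh := mul_lt_mul_of_pos_left h ht'
        rw [show (t:ℝ) * ((1 / t : ℝ) * (∑ τ, x τ ω i * x τ ω j) - Sig i j)
          = (∑ τ, x τ ω i * x τ ω j) - (t:ℝ) * Sig i j from by field_simp] at hh
        linarith
      · right
        rw [Set.mem_setOf_eq, hsplit2]
        have hh := mul_lt_mul_of_pos_left h ht'
        rw [show (t:ℝ) * (-((1 / t : ℝ) * (∑ τ, x τ ω i * x τ ω j) - Sig i j))
          = (t:ℝ) * Sig i j - ∑ τ, x τ ω i * x τ ω j from by field_simp; ring] at hh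
        linarith
    refine le_trans (measure_mono hsub) ?_
    refine le_trans (measure_iUnion_le _) ?_
    have hptw : ∀ p : Fin d × Fin d,
        ℙ ({ω : Ω | (t:ℝ) * δ ≤ ∑ τ, (x τ ω p.1 * x τ ω p.2 - Sig p.1 p.2)} ∪
           {ω : Ω | (t:ℝ) * δ ≤ ∑ τ, (Sig p.1 p.2 - x τ ω p.1 * x τ ω p.2)})
          ≤ ENNReal.ofReal e₀ + ENNReal.ofReal e₀ :=
      fun p => le_trans (measure_union_le _ _) (add_le_add (hU p.1 p.2) (hL p.1 p.2))
    refine le_trans (ENNReal.tsum_le_tsum hptw) ?_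
    rw [tsum_fintype]
    rw [Finset.sum_const, Finset.card_univ, Fintype.card_prod, Fintype.card_fin,
      nsmul_eq_mul]
    have hconv : ((d * d : ℕ) : ENNReal) * (ENNReal.ofReal e₀ + ENNReal.ofReal e₀)
        = ENNReal.ofReal ((d:ℝ) * d * (2 * e₀)) := by
      rw [← ENNReal.ofReal_add (by positivity) (by positivity),
        ← ENNReal.ofReal_natCast (d * d), ← ENNReal.ofReal_mul (by positivity)]
      congr 1
      push_cast
      ring
    rw [hconv]
    apply ENNReal.ofReal_le_ofReal
    have he₀le : e₀ ≤ exp (-(8 * (c ^ 2 * t))) := by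
      rw [he₀]
      apply exp_le_exp.2
      have h64 : 64 * c ^ 2 ≤ δ ^ 2 := by nlinarith
      rw [show -(((t:ℝ) * δ) ^ 2) / (2 * (t:ℝ) * 2 ^ 2) = -((t:ℝ) * (δ ^ 2 / 8)) from by
        field_simp; ring]
      nlinarith [mul_le_mul_of_nonneg_left h64 ht'.le]
    have hlogd : 3 * Real.log d ≤ c ^ 2 * t := by
      have hc2 : (0:ℝ) < c ^ 2 := by positivity
      rw [div_mul_eq_mul_div, div_le_iff₀ hc2] at htlb
      linarith
    calc (d:ℝ) * d * (2 * e₀) ≤ (d:ℝ) * d * (2 * exp (-(8 * (c ^ 2 * t)))) := by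
          have : 2 * e₀ ≤ 2 * exp (-(8 * (c ^ 2 * t))) := by linarith
          exact mul_le_mul_of_nonneg_left this (by positivity)
      _ ≤ exp (-(c ^ 2) * t) := aux_real_bound hd2 hc0 ht' hlogd
end
end

section
/- Let x₁, x₂, …, x_T be i.i.d. random vectors in ℝ^d with ‖x_τ‖_∞ ≤ 1 almost surely for all τ, let Σ = E[x_τ x_τᵀ] and Σ̂_t = (1/t)·Σ_{τ=1}^t x_τ x_τᵀ for each t ≤ T. Let β ∈ ℝ^d with ‖β‖₀ = s₀, suppose Σ ∈ C(supp(β), φ) for some φ > 0, and set c = min(0.5, φ²/(256·s₀)). Fix δ' ∈ (0,1) and let z_T = max( (3/c²)·log d, (1/c²)·log(T²/δ') ). Then with probability at least 1 − δ', for every t with z_T ≤ t ≤ T, Σ̂_t ∈ C(supp(β), φ/√2). -/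
open MeasureTheory ProbabilityTheory Real Finset Matrix
open scoped ENNReal

noncomputable section

lemma aux_int {Ω : Type*} [MeasureSpace Ω] [IsProbabilityMeasure (ℙ : Measure Ω)]
    {Z : Ω → ℝ} (hm : Measurable Z) {C : ℝ} (hb : ∀ᵐ ω ∂(ℙ : Measure Ω), |Z ω| ≤ C) :
    Integrable Z ℙ :=
  ⟨hm.aestronglyMeasurable, HasFiniteIntegral.of_bounded (C := C)
    (by simpa [Real.norm_eq_abs] using hb)⟩


lemma mgf_le_of_abs_le_two {Ω : Type*} [MeasureSpace Ω] [IsProbabilityMeasure (ℙ : Measure Ω)]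
    {Z : Ω → ℝ} (hm : Measurable Z) (hb : ∀ᵐ ω ∂(ℙ : Measure Ω), |Z ω| ≤ 2)
    (hmean : ∫ ω, Z ω ∂(ℙ : Measure Ω) = 0) (s : ℝ) :
    mgf Z ℙ s ≤ exp (2 * s ^ 2) := by
  have hint : Integrable Z ℙ := aux_int hm hb
  have hrhs : Integrable (fun ω => (exp (2*s) + exp (-(2*s)))/2
      + (exp (2*s) - exp (-(2*s)))/4 * Z ω) ℙ :=
    (integrable_const _).add (hint.const_mul _)
  have hexp_int : Integrable (fun ω => exp (s * Z ω)) ℙ := by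
    refine aux_int ((hm.const_mul s).exp) (C := exp (2*|s|)) ?_
    filter_upwards [hb] with ω hω
    rw [abs_of_pos (exp_pos _), exp_le_exp]
    calc s * Z ω ≤ |s * Z ω| := le_abs_self _
    _ = |s| * |Z ω| := abs_mul _ _
    _ ≤ |s| * 2 := by nlinarith [abs_nonneg s]
    _ = 2 * |s| := by ring
  have key : mgf Z ℙ s ≤ Real.cosh (2*s) := by
    have hpt : ∀ᵐ ω ∂(ℙ : Measure Ω), exp (s * Z ω) ≤ (exp (2*s) + exp (-(2*s)))/2
        + (exp (2*s) - exp (-(2*s)))/4 * Z ω := by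
      filter_upwards [hb] with ω hω
      obtain ⟨h1, h2⟩ := abs_le.1 hω
      have hcvx := convexOn_exp.2 (Set.mem_univ (-(2*s))) (Set.mem_univ (2*s))
        (by linarith : (0:ℝ) ≤ (2 - Z ω)/4) (by linarith : (0:ℝ) ≤ (2 + Z ω)/4)
        (by ring)
      simp only [smul_eq_mul] at hcvx
      have harg : (2 - Z ω)/4 * (-(2*s)) + (2 + Z ω)/4 * (2*s) = s * Z ω := by ring
      rw [harg] at hcvx
      calc exp (s * Z ω) ≤ (2 - Z ω)/4 * exp (-(2*s)) + (2 + Z ω)/4 * exp (2*s) := hcvx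
      _ = (exp (2*s) + exp (-(2*s)))/2 + (exp (2*s) - exp (-(2*s)))/4 * Z ω := by ring
    have := integral_mono_ae hexp_int hrhs hpt
    rw [integral_add (integrable_const _) (hint.const_mul _), integral_const,
      integral_const_mul, hmean] at this
    simpa [mgf, Real.cosh_eq, measure_univ] using this
  refine key.trans ?_
  have := Real.cosh_le_exp_half_sq (2*s)
  calc Real.cosh (2*s) ≤ exp ((2*s)^2/2) := this
  _ = exp (2 * s^2) := by ring_nf

lemma hoeff_sum {Ω : Type*} [MeasureSpace Ω] [IsProbabilityMeasure (ℙ : Measure Ω)]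
    {ι : Type*} (Y : ι → Ω → ℝ)
    (hindep : iIndepFun Y ℙ)
    (hmeas : ∀ τ, Measurable (Y τ))
    (hb : ∀ τ, ∀ᵐ ω ∂(ℙ : Measure Ω), |Y τ ω| ≤ 2)
    (hmean : ∀ τ, ∫ ω, Y τ ω ∂(ℙ : Measure Ω) = 0)
    (s : Finset ι) {c : ℝ} (hc : 0 < c) :
    ℙ {ω | 8 * c * s.card ≤ |∑ τ ∈ s, Y τ ω|}
      ≤ ENNReal.ofReal (2 * exp (-(8 * s.card * c ^ 2))) := by
  set n : ℝ := (s.card : ℝ) with hn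
  have hn0 : 0 ≤ n := Nat.cast_nonneg _
  have hint_exp : ∀ (u : ℝ) (τ : ι), Integrable (fun ω => exp (u * Y τ ω)) ℙ := by
    intro u τ
    refine aux_int ((hmeas τ).const_mul u).exp (C := exp (2*|u|)) ?_
    filter_upwards [hb τ] with ω hω
    rw [abs_of_pos (exp_pos _), exp_le_exp]
    calc u * Y τ ω ≤ |u * Y τ ω| := le_abs_self _
    _ = |u| * |Y τ ω| := abs_mul _ _
    _ ≤ |u| * 2 := by nlinarith [abs_nonneg u]
    _ = 2 * |u| := by ring
  have hmgf : ∀ (u : ℝ), mgf (∑ τ ∈ s, Y τ) ℙ u ≤ exp (2 * n * u ^ 2) := by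
    intro u
    rw [hindep.mgf_sum hmeas]
    have h1 : ∏ τ ∈ s, mgf (Y τ) ℙ u ≤ ∏ τ ∈ s, exp (2 * u ^ 2) :=
      Finset.prod_le_prod (fun τ _ => mgf_nonneg)
        (fun τ _ => mgf_le_of_abs_le_two (hmeas τ) (hb τ) (hmean τ) u)
    have h2 : ∏ τ ∈ s, exp (2 * u ^ 2) = exp (2 * n * u ^ 2) := by
      rw [Finset.prod_const, ← Real.exp_nat_mul, hn]; ring_nf
    linarith
  have hsum_int : ∀ (u : ℝ), Integrable (fun ω => exp (u * (∑ τ ∈ s, Y τ) ω)) ℙ :=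
    fun u => hindep.integrable_exp_mul_sum hmeas (fun τ _ => hint_exp u τ)
  -- upper tail
  have hup : (ℙ {ω | 8 * c * n ≤ (∑ τ ∈ s, Y τ) ω}).toReal ≤ exp (-(8 * n * c ^ 2)) := by
    have := measure_ge_le_exp_mul_mgf (X := ∑ τ ∈ s, Y τ) (μ := ℙ) (t := 2*c)
      (8 * c * n) (by positivity) (hsum_int (2*c))
    refine this.trans ?_
    calc exp (-(2*c) * (8*c*n)) * mgf (∑ τ ∈ s, Y τ) ℙ (2*c)
        ≤ exp (-(2*c) * (8*c*n)) * exp (2 * n * (2*c)^2) := by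
          exact mul_le_mul_of_nonneg_left (hmgf (2*c)) (exp_pos _).le
    _ = exp (-(8 * n * c ^ 2)) := by rw [← Real.exp_add]; ring_nf
  have hlo : (ℙ {ω | (∑ τ ∈ s, Y τ) ω ≤ -(8 * c * n)}).toReal ≤ exp (-(8 * n * c ^ 2)) := by
    have := measure_le_le_exp_mul_mgf (X := ∑ τ ∈ s, Y τ) (μ := ℙ) (t := -(2*c))
      (-(8 * c * n)) (by linarith) (hsum_int (-(2*c)))
    refine this.trans ?_
    calc exp (-(-(2*c)) * (-(8*c*n))) * mgf (∑ τ ∈ s, Y τ) ℙ (-(2*c))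
        ≤ exp (-(-(2*c)) * (-(8*c*n))) * exp (2 * n * (-(2*c))^2) := by
          exact mul_le_mul_of_nonneg_left (hmgf (-(2*c))) (exp_pos _).le
    _ = exp (-(8 * n * c ^ 2)) := by rw [← Real.exp_add]; ring_nf
  have hsub : {ω | 8 * c * n ≤ |∑ τ ∈ s, Y τ ω|}
      ⊆ {ω | 8 * c * n ≤ (∑ τ ∈ s, Y τ) ω} ∪ {ω | (∑ τ ∈ s, Y τ) ω ≤ -(8 * c * n)} := by
    intro ω hω
    simp only [Set.mem_setOf_eq] at hω
    rcases le_abs.1 hω with h | h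
    · left; simpa using h
    · right
      simp only [Set.mem_setOf_eq, Finset.sum_apply]
      have : ∑ τ ∈ s, Y τ ω = (∑ τ ∈ s, Y τ) ω := by simp [Finset.sum_apply]
      simp only [Finset.sum_apply] at this ⊢
      linarith
  calc ℙ {ω | 8 * c * n ≤ |∑ τ ∈ s, Y τ ω|}
      ≤ ℙ ({ω | 8 * c * n ≤ (∑ τ ∈ s, Y τ) ω} ∪ {ω | (∑ τ ∈ s, Y τ) ω ≤ -(8 * c * n)}) :=
        measure_mono hsub
    _ ≤ ℙ {ω | 8 * c * n ≤ (∑ τ ∈ s, Y τ) ω} + ℙ {ω | (∑ τ ∈ s, Y τ) ω ≤ -(8 * c * n)} :=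
        measure_union_le _ _
    _ ≤ ENNReal.ofReal (exp (-(8 * n * c ^ 2))) + ENNReal.ofReal (exp (-(8 * n * c ^ 2))) := by
        gcongr
        · rw [← ENNReal.ofReal_toReal (measure_ne_top ℙ _)]
          exact ENNReal.ofReal_le_ofReal hup
        · rw [← ENNReal.ofReal_toReal (measure_ne_top ℙ _)]
          exact ENNReal.ofReal_le_ofReal hlo
    _ = ENNReal.ofReal (2 * exp (-(8 * n * c ^ 2))) := by
        rw [← ENNReal.ofReal_add (exp_pos _).le (exp_pos _).le]; ring_nf

lemma transfer {d : ℕ} (I : Finset (Fin d)) (s₀ : ℕ) (hcard : I.card = s₀) (hs1 : 1 ≤ s₀)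
    (φ : ℝ) (hφ : 0 < φ) (S M : Matrix (Fin d) (Fin d) ℝ)
    (hS : S ∈ compatSet I φ)
    (hclose : ∀ i j, |M i j - S i j| ≤ φ ^ 2 / (32 * s₀)) :
    M ∈ compatSet I (φ / Real.sqrt 2) := by
  intro v hv
  have hcs := hS v hv
  rw [hcard] at hcs ⊢
  set a := ∑ i ∈ I, |v i| with ha
  have ha0 : 0 ≤ a := Finset.sum_nonneg (fun _ _ => abs_nonneg _)
  have hs0R : (0:ℝ) < (s₀ : ℝ) := by exact_mod_cast hs1
  have hφ2 : (0:ℝ) < φ ^ 2 := by positivity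
  have hl1 : ∑ i, |v i| ≤ 4 * a := by
    rw [← Finset.sum_add_sum_compl I]
    linarith
  have hl1' : (0:ℝ) ≤ ∑ i, |v i| := Finset.sum_nonneg (fun _ _ => abs_nonneg _)
  -- quadratic form expansion
  have hexp : ∀ N : Matrix (Fin d) (Fin d) ℝ,
      v ⬝ᵥ N.mulVec v = ∑ i, ∑ j, v i * N i j * v j := by
    intro N
    simp [dotProduct, Matrix.mulVec, Finset.mul_sum, mul_assoc]
  have hdiff : |v ⬝ᵥ M.mulVec v - v ⬝ᵥ S.mulVec v| ≤ φ^2/(32*s₀) * (∑ i, |v i|)^2 := by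
    rw [hexp M, hexp S, ← Finset.sum_sub_distrib]
    simp_rw [← Finset.sum_sub_distrib]
    calc |∑ i, ∑ j, (v i * M i j * v j - v i * S i j * v j)|
        ≤ ∑ i, |∑ j, (v i * M i j * v j - v i * S i j * v j)| := Finset.abs_sum_le_sum_abs _ _
      _ ≤ ∑ i, ∑ j, |v i * M i j * v j - v i * S i j * v j| :=
          Finset.sum_le_sum (fun i _ => Finset.abs_sum_le_sum_abs _ _)
      _ ≤ ∑ i, ∑ j, |v i| * |v j| * (φ^2/(32*s₀)) := by
          refine Finset.sum_le_sum (fun i _ => Finset.sum_le_sum (fun j _ => ?_))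
          have : v i * M i j * v j - v i * S i j * v j = v i * v j * (M i j - S i j) := by ring
          rw [this, abs_mul, abs_mul]
          have h1 : |v i| * |v j| * |M i j - S i j| ≤ |v i| * |v j| * (φ^2/(32*s₀)) := by
            apply mul_le_mul_of_nonneg_left (hclose i j) (by positivity)
          exact h1
      _ = φ^2/(32*s₀) * (∑ i, |v i|)^2 := by
          have hsq : (∑ i, |v i|)^2 = ∑ i, ∑ j, |v i| * |v j| := by
            rw [sq, Finset.sum_mul_sum]
          rw [hsq, Finset.mul_sum]
          refine Finset.sum_congr rfl fun i _ => ?_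
          rw [Finset.mul_sum]
          exact Finset.sum_congr rfl fun j _ => by ring
  have hQ0 : φ^2 * a^2 / s₀ ≤ v ⬝ᵥ S.mulVec v := by
    rw [le_div_iff₀ hφ2] at hcs
    rw [div_le_iff₀ hs0R]
    nlinarith
  have habs := abs_le.1 hdiff
  have hQ : φ^2 * a^2 / (2*s₀) ≤ v ⬝ᵥ M.mulVec v := by
    have h16 : (∑ i, |v i|)^2 ≤ 16 * a^2 := by nlinarith
    have : φ^2/(32*s₀) * (∑ i, |v i|)^2 ≤ φ^2/(32*s₀) * (16*a^2) := by
      apply mul_le_mul_of_nonneg_left h16 (by positivity)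
    have hh : φ^2/(32*s₀) * (16*a^2) = φ^2*a^2/(2*s₀) := by field_simp; ring
    have h2 : φ^2*a^2/s₀ - φ^2*a^2/(2*s₀) = φ^2*a^2/(2*s₀) := by field_simp; ring
    linarith
  have hsqrt : (φ / Real.sqrt 2) ^ 2 = φ^2 / 2 := by
    rw [div_pow, Real.sq_sqrt (by norm_num : (0:ℝ) ≤ 2)]
  rw [hsqrt, le_div_iff₀ (by positivity : (0:ℝ) < φ^2/2)]
  rw [div_le_iff₀ (by positivity : (0:ℝ) < 2*(s₀:ℝ))] at hQ
  nlinarith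

-- per-term numeric bound
set_option maxHeartbeats 1000000 in
lemma perterm (d T : ℕ) (hd : 0 < d) (hT : 0 < T) (δ' c tR : ℝ) (hδ0 : 0 < δ') (hδ1 : δ' < 1)
    (hne : 2 ≤ d ∨ 2 ≤ T ∨ δ' ≤ 1/2)
    (h3 : 3 * Real.log d ≤ tR * c ^ 2) (hlog : Real.log ((T:ℝ)^2/δ') ≤ tR * c ^ 2) :
    (d:ℝ)^2 * (2 * exp (-(8 * tR * c ^ 2))) ≤ δ' / T := by
  have hd1 : (1:ℝ) ≤ d := by exact_mod_cast hd
  have hT1 : (1:ℝ) ≤ T := by exact_mod_cast hT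
  have hdpos : (0:ℝ) < d := by linarith
  have hTpos : (0:ℝ) < T := by linarith
  set E := exp (-(tR * c ^ 2)) with hE
  have hEpos : 0 < E := exp_pos _
  have hE8 : exp (-(8 * tR * c ^ 2)) = E ^ 8 := by
    rw [hE, ← Real.exp_nat_mul]; ring_nf
  have hEd : E ≤ ((d:ℝ)⁻¹) ^ 3 := by
    have h1 : E ≤ exp (-(3 * Real.log d)) := exp_le_exp.2 (by linarith)
    have h2 : exp (-(3 * Real.log (d:ℝ))) = ((d:ℝ)⁻¹) ^ 3 := by
      rw [show -(3 * Real.log (d:ℝ)) = (3:ℕ) * (-Real.log (d:ℝ)) by push_cast; ring,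
        Real.exp_nat_mul, Real.exp_neg, Real.exp_log hdpos]
    linarith [h1, h2.le, h2.ge]
  have hET : E ≤ δ' / (T:ℝ)^2 := by
    have h1 : E ≤ exp (-Real.log ((T:ℝ)^2/δ')) := exp_le_exp.2 (by linarith)
    have h2 : exp (-Real.log ((T:ℝ)^2/δ')) = δ' / (T:ℝ)^2 := by
      rw [Real.exp_neg, Real.exp_log (by positivity), inv_div]
    linarith [h1, h2.le]
  have hdinv : (0:ℝ) < (d:ℝ)⁻¹ := by positivity
  have hdinv1 : (d:ℝ)⁻¹ ≤ 1 := by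
    rw [inv_le_one_iff₀]; right; exact hd1
  have hETpos : 0 < δ' / (T:ℝ)^2 := by positivity
  rw [hE8]
  rcases hne with hd2 | hT2 | hsmall
  · -- d ≥ 2 : E^8 ≤ (d⁻¹)^21 * (δ'/T²)
    have hd2' : (2:ℝ) ≤ d := by exact_mod_cast hd2
    have h1 : E ^ 8 = (E^7) * E := by ring
    have h7 : E ^ 7 ≤ ((d:ℝ)⁻¹)^21 := by
      calc E ^ 7 ≤ (((d:ℝ)⁻¹)^3) ^ 7 := pow_le_pow_left₀ hEpos.le hEd 7
      _ = ((d:ℝ)⁻¹)^21 := by ring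
    have hinv2 : (d:ℝ)⁻¹ ≤ 2⁻¹ := by
      rw [inv_le_inv₀ hdpos (by norm_num)]; exact hd2'
    have h21 : ((d:ℝ)⁻¹)^21 ≤ (d:ℝ)⁻¹^2 * (2:ℝ)⁻¹^19 := by
      have : ((d:ℝ)⁻¹)^21 = (d:ℝ)⁻¹^2 * ((d:ℝ)⁻¹)^19 := by ring
      rw [this]
      gcongr
    have hfin : (d:ℝ)^2 * (2 * (((d:ℝ)⁻¹^2 * (2:ℝ)⁻¹^19) * (δ'/(T:ℝ)^2))) ≤ δ' / T := by
      have hdd : (d:ℝ)^2 * (d:ℝ)⁻¹^2 = 1 := by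
        field_simp
      rw [show (d:ℝ)^2 * (2 * (((d:ℝ)⁻¹^2 * (2:ℝ)⁻¹^19) * (δ'/(T:ℝ)^2)))
          = ((d:ℝ)^2 * (d:ℝ)⁻¹^2) * (2 * (2:ℝ)⁻¹^19) * (δ'/(T:ℝ)^2) by ring, hdd, one_mul]
      have hco : (2 * (2:ℝ)⁻¹^19) ≤ 1 := by norm_num
      have hstep : δ'/(T:ℝ)^2 ≤ δ'/T := by
        rw [div_le_div_iff₀ (show (0:ℝ) < (T:ℝ)^2 by positivity) hTpos]
        nlinarith [mul_nonneg (mul_nonneg hδ0.le hTpos.le) (sub_nonneg.2 hT1)]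
      nlinarith [hETpos]
    calc (d:ℝ)^2 * (2 * E^8) ≤ (d:ℝ)^2 * (2 * (((d:ℝ)⁻¹^2 * (2:ℝ)⁻¹^19) * (δ'/(T:ℝ)^2))) := by
          have : E ^ 8 ≤ ((d:ℝ)⁻¹^2 * (2:ℝ)⁻¹^19) * (δ'/(T:ℝ)^2) := by
            rw [h1]
            calc E^7 * E ≤ ((d:ℝ)⁻¹)^21 * (δ'/(T:ℝ)^2) := by
                  apply mul_le_mul h7 hET hEpos.le (by positivity)
            _ ≤ ((d:ℝ)⁻¹^2 * (2:ℝ)⁻¹^19) * (δ'/(T:ℝ)^2) := by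
                  apply mul_le_mul_of_nonneg_right h21 hETpos.le
          nlinarith [sq_nonneg (d:ℝ), this, hdpos]
    _ ≤ δ' / T := hfin
  · -- T ≥ 2
    have hT2' : (2:ℝ) ≤ T := by exact_mod_cast hT2
    have h7 : E ^ 7 ≤ ((d:ℝ)⁻¹)^21 := by
      calc E ^ 7 ≤ (((d:ℝ)⁻¹)^3) ^ 7 := pow_le_pow_left₀ hEpos.le hEd 7
      _ = ((d:ℝ)⁻¹)^21 := by ring
    have h21 : ((d:ℝ)⁻¹)^21 ≤ (d:ℝ)⁻¹^2 := by
      calc ((d:ℝ)⁻¹)^21 = (d:ℝ)⁻¹^2 * ((d:ℝ)⁻¹)^19 := by ring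
      _ ≤ (d:ℝ)⁻¹^2 * 1 := by gcongr; exact pow_le_one₀ hdinv.le hdinv1
      _ = (d:ℝ)⁻¹^2 := by ring
    have hdd : (d:ℝ)^2 * (d:ℝ)⁻¹^2 = 1 := by field_simp
    have hkey : E ^ 8 ≤ (d:ℝ)⁻¹^2 * (δ'/(T:ℝ)^2) := by
      calc E ^ 8 = E^7 * E := by ring
      _ ≤ ((d:ℝ)⁻¹)^21 * (δ'/(T:ℝ)^2) := mul_le_mul h7 hET hEpos.le (by positivity)
      _ ≤ (d:ℝ)⁻¹^2 * (δ'/(T:ℝ)^2) := mul_le_mul_of_nonneg_right h21 hETpos.le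
    calc (d:ℝ)^2 * (2 * E^8) ≤ (d:ℝ)^2 * (2 * ((d:ℝ)⁻¹^2 * (δ'/(T:ℝ)^2))) :=
          mul_le_mul_of_nonneg_left (by linarith) (by positivity)
    _ = ((d:ℝ)^2 * (d:ℝ)⁻¹^2) * (2 * (δ'/(T:ℝ)^2)) := by ring
    _ = 2 * δ' / (T:ℝ)^2 := by rw [hdd, one_mul]; ring
    _ ≤ δ' / T := by
          rw [div_le_div_iff₀ (show (0:ℝ) < (T:ℝ)^2 by positivity) hTpos]
          nlinarith [mul_nonneg hδ0.le (mul_nonneg hTpos.le (sub_nonneg.2 hT2'))]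
  · -- δ' ≤ 1/2
    have h6 : E ^ 6 ≤ ((d:ℝ)⁻¹)^18 := by
      calc E ^ 6 ≤ (((d:ℝ)⁻¹)^3) ^ 6 := pow_le_pow_left₀ hEpos.le hEd 6
      _ = ((d:ℝ)⁻¹)^18 := by ring
    have h18 : ((d:ℝ)⁻¹)^18 ≤ (d:ℝ)⁻¹^2 := by
      calc ((d:ℝ)⁻¹)^18 = (d:ℝ)⁻¹^2 * ((d:ℝ)⁻¹)^16 := by ring
      _ ≤ (d:ℝ)⁻¹^2 * 1 := by gcongr; exact pow_le_one₀ hdinv.le hdinv1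
      _ = (d:ℝ)⁻¹^2 := by ring
    have hdd : (d:ℝ)^2 * (d:ℝ)⁻¹^2 = 1 := by field_simp
    have hE2 : E ^ 2 ≤ (δ'/(T:ℝ)^2)^2 := pow_le_pow_left₀ hEpos.le hET 2
    have hkey : E ^ 8 ≤ (d:ℝ)⁻¹^2 * (δ'/(T:ℝ)^2)^2 := by
      calc E ^ 8 = E^6 * E^2 := by ring
      _ ≤ ((d:ℝ)⁻¹)^18 * (δ'/(T:ℝ)^2)^2 := mul_le_mul h6 hE2 (by positivity) (by positivity)
      _ ≤ (d:ℝ)⁻¹^2 * (δ'/(T:ℝ)^2)^2 := mul_le_mul_of_nonneg_right h18 (by positivity)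
    calc (d:ℝ)^2 * (2 * E^8) ≤ (d:ℝ)^2 * (2 * ((d:ℝ)⁻¹^2 * (δ'/(T:ℝ)^2)^2)) :=
          mul_le_mul_of_nonneg_left (by linarith) (by positivity)
    _ = ((d:ℝ)^2 * (d:ℝ)⁻¹^2) * (2 * (δ'/(T:ℝ)^2)^2) := by ring
    _ = 2 * (δ'/(T:ℝ)^2)^2 := by rw [hdd, one_mul]
    _ = 2 * δ'^2 / (T:ℝ)^4 := by field_simp
    _ ≤ δ' / T := by
          rw [div_le_div_iff₀ (show (0:ℝ) < (T:ℝ)^4 by positivity) hTpos]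
          have hT3 : (1:ℝ) ≤ (T:ℝ)^3 := one_le_pow₀ hT1
          nlinarith [mul_nonneg (mul_nonneg hδ0.le hδ0.le) hTpos.le,
            mul_nonneg hδ0.le (sub_nonneg.2 hT3)]

example : True := trivial

set_option maxHeartbeats 1000000 in
/-- **Corollary 3.4: uniform compatibility of the empirical Gram matrices.** With
`x₁, …, x_T` i.i.d., `‖x_τ‖_∞ ≤ 1` a.s., `Σ = E[x_τ x_τᵀ] ∈ C(supp β, φ)`,
`c = min(0.5, φ²/(256 s₀))` and `z_T = max((3/c²) log d, (1/c²) log(T²/δ'))`, with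
probability at least `1 - δ'` we have `Σ̂_t ∈ C(supp β, φ/√2)` for all `z_T ≤ t ≤ T`. -/
theorem stmt3
    {Ω : Type*} [MeasureSpace Ω] [IsProbabilityMeasure (ℙ : Measure Ω)]
    (d T : ℕ) (hd : 0 < d) (hT : 0 < T)
    (x : ℕ → Ω → Fin d → ℝ) (hxmeas : ∀ τ, Measurable (x τ))
    (hxindep : iIndepFun
      (fun τ : (Finset.Icc 1 T : Finset ℕ) => x τ) ℙ)
    (hxident : ∀ τ τ' : ℕ, τ ∈ Finset.Icc 1 T → τ' ∈ Finset.Icc 1 T →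
      Measure.map (x τ) ℙ = Measure.map (x τ') ℙ)
    (hxbdd : ∀ τ ∈ Finset.Icc 1 T, ∀ᵐ ω ∂(ℙ : Measure Ω), ∀ i, |x τ ω i| ≤ 1)
    (β : Fin d → ℝ) (s₀ : ℕ) (hs₀ : l0Norm β = s₀)
    (Sig : Matrix (Fin d) (Fin d) ℝ)
    (hSig : ∀ τ ∈ Finset.Icc 1 T, ∀ i j, Sig i j = ∫ ω, x τ ω i * x τ ω j ∂(ℙ : Measure Ω))
    (φ : ℝ) (hφ : 0 < φ)
    (hcompat : Sig ∈ compatSet (spt β) φ)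
    (c : ℝ) (hc : c = min 0.5 (φ ^ 2 / (256 * s₀)))
    (δ' : ℝ) (hδ' : δ' ∈ Set.Ioo (0 : ℝ) 1)
    (zT : ℝ) (hzT : zT = max ((3 / c ^ 2) * Real.log d) ((1 / c ^ 2) * Real.log (T ^ 2 / δ'))) :
    ENNReal.ofReal (1 - δ') ≤
      ℙ {ω | ∀ t : ℕ, zT ≤ (t : ℝ) → t ≤ T →
        (fun i j => (1 / t : ℝ) * ∑ τ ∈ Finset.Icc 1 t, x τ ω i * x τ ω j)
          ∈ compatSet (spt β) (φ / Real.sqrt 2)} := by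
  classical
  obtain ⟨hδ0, hδ1⟩ := hδ'
  -- case s₀ = 0
  rcases Nat.eq_zero_or_pos s₀ with hs00 | hs0pos
  · have hspt : spt β = ∅ := by
      rw [← Finset.card_eq_zero]
      show l0Norm β = 0
      rw [hs₀, hs00]
    have hall : ∀ (M : Matrix (Fin d) (Fin d) ℝ), M ∈ compatSet (spt β) (φ / Real.sqrt 2) := by
      intro M v hv
      rw [hspt]
      simp
    have : {ω : Ω | ∀ t : ℕ, zT ≤ (t : ℝ) → t ≤ T →
        (fun i j => (1 / t : ℝ) * ∑ τ ∈ Finset.Icc 1 t, x τ ω i * x τ ω j)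
          ∈ compatSet (spt β) (φ / Real.sqrt 2)} = Set.univ := by
      ext ω; simp only [Set.mem_setOf_eq, Set.mem_univ, iff_true]
      intro t _ _; exact hall _
    rw [this, measure_univ]
    exact ENNReal.ofReal_le_one.2 (by linarith)
  -- now s₀ ≥ 1
  have hI : (spt β).card = s₀ := hs₀
  have hs0R : (0:ℝ) < (s₀:ℝ) := by exact_mod_cast hs0pos
  have hc0 : 0 < c := by
    rw [hc]
    apply lt_min (by norm_num)
    positivity
  have hcφ : c ≤ φ^2/(256*s₀) := by rw [hc]; exact min_le_right _ _
  have hc12 : c ≤ 1/2 := by rw [hc]; calc min 0.5 (φ ^ 2 / (256 * ↑s₀)) ≤ 0.5 := min_le_left _ _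
                                    _ = 1/2 := by norm_num
  have h8c : 8 * c ≤ φ^2/(32*s₀) := by
    have : φ^2/(32*(s₀:ℝ)) = 8 * (φ^2/(256*s₀)) := by field_simp; ring
    rw [this]; linarith
  have hT1R : (1:ℝ) ≤ (T:ℝ) := by exact_mod_cast hT
  have hlogTpos : 0 < Real.log (T ^ 2 / δ') := by
    apply Real.log_pos
    rw [lt_div_iff₀ hδ0]
    have : (T:ℝ)^2 ≥ 1 := by nlinarith
    push_cast
    nlinarith
  have hzTpos : 0 < zT := by
    rw [hzT]
    apply lt_max_of_lt_right
    positivity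
  have hSbd : ∀ i j, |Sig i j| ≤ 1 := by
    intro i j
    rw [hSig 1 (Finset.mem_Icc.2 ⟨le_refl 1, hT⟩) i j]
    have hb : ∀ᵐ ω ∂(ℙ : Measure Ω), ‖x 1 ω i * x 1 ω j‖ ≤ 1 := by
      filter_upwards [hxbdd 1 (Finset.mem_Icc.2 ⟨le_refl 1, hT⟩)] with ω hω
      rw [norm_eq_abs, abs_mul]
      exact mul_le_one₀ (hω i) (abs_nonneg _) (hω j)
    have := norm_integral_le_of_norm_le_const (μ := (ℙ : Measure Ω)) hb
    simpa [measure_univ] using this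
  by_cases hedge : d = 1 ∧ T = 1
  · -- edge case d = T = 1
    obtain ⟨hd1, hT1⟩ := hedge
    subst hd1; subst hT1
    have hs01 : s₀ = 1 := by
      have h1 : (spt β).card ≤ 1 := by
        calc (spt β).card ≤ (Finset.univ : Finset (Fin 1)).card := Finset.card_le_univ _
        _ = 1 := by decide
      omega
    subst hs01
    have hIu : spt β = Finset.univ := Finset.eq_univ_of_card _ (by simp [hI])
    have hsqrt : (φ / Real.sqrt 2) ^ 2 = φ^2 / 2 := by
      rw [div_pow, Real.sq_sqrt (by norm_num : (0:ℝ) ≤ 2)]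
    have hmem1 : (1:ℕ) ∈ Finset.Icc 1 1 := by simp
    -- Sig 0 0 ≥ φ², ≤ 1
    have hS00ge : φ^2 ≤ Sig 0 0 := by
      have hcone : ∑ i ∈ (spt β)ᶜ, |(1:ℝ)| ≤ 3 * ∑ i ∈ spt β, |(1:ℝ)| := by
        rw [hIu, Finset.compl_univ]
        simp only [Finset.sum_empty, abs_one, Finset.sum_const, Finset.card_univ,
          Fintype.card_fin, smul_eq_mul, mul_one]
        norm_num
      have hcs := hcompat (fun _ => 1) hcone
      rw [hIu] at hcs
      simp only [abs_one, Fin.sum_univ_one, Finset.card_univ, Fintype.card_fin,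
        Nat.cast_one, one_mul, one_pow] at hcs
      have hq : (fun _ => (1:ℝ)) ⬝ᵥ Sig.mulVec (fun _ => (1:ℝ)) = Sig 0 0 := by
        simp [dotProduct, Matrix.mulVec, Fin.sum_univ_one]
      rw [hq] at hcs
      rw [le_div_iff₀ (by positivity : (0:ℝ) < φ^2)] at hcs
      linarith
    have hS00le : Sig 0 0 ≤ 1 := (le_abs_self _).trans (hSbd 0 0)
    have hφ1 : φ^2 ≤ 1 := le_trans hS00ge hS00le
    set f : Ω → ℝ := fun ω => x 1 ω 0 * x 1 ω 0 with hf
    have hfmeas : Measurable f :=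
      ((measurable_pi_apply 0).comp (hxmeas 1)).mul ((measurable_pi_apply 0).comp (hxmeas 1))
    have hfbd : ∀ᵐ ω ∂(ℙ : Measure Ω), |f ω| ≤ 1 := by
      filter_upwards [hxbdd 1 hmem1] with ω hω
      rw [hf, abs_mul]
      exact mul_le_one₀ (hω 0) (abs_nonneg _) (hω 0)
    have hfint : Integrable f ℙ := aux_int hfmeas hfbd
    have hSig00 : Sig 0 0 = ∫ ω, f ω ∂(ℙ : Measure Ω) := hSig 1 hmem1 0 0
    by_cases hz1 : zT ≤ 1
    · -- use Markov-type argument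
      have hlogδ : Real.log (1/δ') ≤ c^2 := by
        have h1 : (1 / c ^ 2) * Real.log ((1:ℕ) ^ 2 / δ') ≤ zT := by
          rw [hzT]; exact le_max_right _ _
        have h2 : Real.log ((1:ℕ)^2/δ') = Real.log (1/δ') := by norm_num
        rw [h2] at h1
        have hc2 : (0:ℝ) < c^2 := by positivity
        rw [div_mul_eq_mul_div, div_le_iff₀ hc2] at h1
        nlinarith [h1]
      have h1δ : 1 - δ' ≤ c^2 := by
        have := Real.log_le_sub_one_of_pos hδ0
        have hlog1 : Real.log (1/δ') = -Real.log δ' := by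
          rw [one_div, Real.log_inv]
        linarith
      have hcφ1 : c ≤ φ^2/256 := by
        have : φ^2/(256*((1:ℕ):ℝ)) = φ^2/256 := by norm_num
        rw [← this]; exact hcφ
      have hcsq : c^2 ≤ φ^2/2 := by
        have h2 : c^2 ≤ (φ^2/256)^2 := pow_le_pow_left₀ hc0.le hcφ1 2
        nlinarith
      set A : Set Ω := {ω | φ^2/2 ≤ f ω} with hA
      have hAmeas : MeasurableSet A := measurableSet_le measurable_const hfmeas
      have hPA : φ^2/2 ≤ (ℙ A).toReal := by
        have hrhs : Integrable (fun ω => A.indicator (fun _ => (1:ℝ)) ω + φ^2/2) ℙ :=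
          ((integrable_const (1:ℝ)).indicator hAmeas).add (integrable_const _)
        have hpt : ∀ᵐ ω ∂(ℙ : Measure Ω), f ω ≤ A.indicator (fun _ => (1:ℝ)) ω + φ^2/2 := by
          filter_upwards [hfbd] with ω hω
          by_cases hωA : ω ∈ A
          · rw [Set.indicator_of_mem hωA]
            have := (abs_le.1 hω).2
            nlinarith
          · rw [Set.indicator_of_notMem hωA]
            have : ¬ (φ^2/2 ≤ f ω) := hωA
            push_neg at this
            linarith
        have hle := integral_mono_ae hfint hrhs hpt
        rw [integral_add ((integrable_const (1:ℝ)).indicator hAmeas) (integrable_const _),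
          integral_indicator_const _ hAmeas, integral_const] at hle
        simp only [Measure.real, measure_univ, ENNReal.toReal_one, smul_eq_mul, mul_one, one_smul] at hle
        rw [← hSig00] at hle
        linarith
      have hsubA : A ⊆ {ω : Ω | ∀ t : ℕ, zT ≤ (t : ℝ) → t ≤ 1 →
          (fun i j => (1 / t : ℝ) * ∑ τ ∈ Finset.Icc 1 t, x τ ω i * x τ ω j)
            ∈ compatSet (spt β) (φ / Real.sqrt 2)} := by
        intro ω hωA
        intro t hzt ht1
        interval_cases t
        · exfalso
          simp only [Nat.cast_zero] at hzt
          linarith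
        · intro v hv
          rw [hIu]
          have hM : (1 / ((1:ℕ):ℝ)) * ∑ τ ∈ Finset.Icc 1 1, x τ ω 0 * x τ ω 0 = f ω := by
            simp [hf]
          have hq : v ⬝ᵥ (Matrix.mulVec (fun i j => (1/((1:ℕ):ℝ)) * ∑ τ ∈ Finset.Icc 1 1, x τ ω i * x τ ω j) v)
              = v 0 * (f ω * v 0) := by
            simp only [dotProduct, Matrix.mulVec, Fin.sum_univ_one]
            rw [hM]
          rw [hq, hsqrt]
          have hcard1 : (((Finset.univ : Finset (Fin 1)).card) : ℝ) = 1 := by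
            simp [Fintype.card_fin]
          rw [hcard1, one_mul]
          have hsum1 : ∑ i ∈ (Finset.univ : Finset (Fin 1)), |v i| = |v 0| :=
            Fin.sum_univ_one _
          rw [hsum1, le_div_iff₀ (by positivity : (0:ℝ) < φ^2/2), sq_abs]
          have hωA' : φ^2/2 ≤ f ω := hωA
          nlinarith [sq_nonneg (v 0)]
      calc ENNReal.ofReal (1 - δ') ≤ ENNReal.ofReal ((ℙ A).toReal) := by
            apply ENNReal.ofReal_le_ofReal
            linarith
      _ = ℙ A := ENNReal.ofReal_toReal (measure_ne_top _ _)
      _ ≤ _ := measure_mono hsubA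
    · -- zT > 1 : event is everything
      push_neg at hz1
      have : {ω : Ω | ∀ t : ℕ, zT ≤ (t : ℝ) → t ≤ 1 →
          (fun i j => (1 / t : ℝ) * ∑ τ ∈ Finset.Icc 1 t, x τ ω i * x τ ω j)
            ∈ compatSet (spt β) (φ / Real.sqrt 2)} = Set.univ := by
        ext ω; simp only [Set.mem_setOf_eq, Set.mem_univ, iff_true]
        intro t hzt ht1
        interval_cases t
        · exfalso; simp only [Nat.cast_zero] at hzt; linarith
        · exfalso; simp only [Nat.cast_one] at hzt; linarith
      rw [this, measure_univ]
      exact ENNReal.ofReal_le_one.2 (by linarith)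
  · -- main case
    have hne : 2 ≤ d ∨ 2 ≤ T ∨ δ' ≤ 1/2 := by
      rcases Nat.lt_or_ge d 2 with h | h
      · rcases Nat.lt_or_ge T 2 with h' | h'
        · exact absurd ⟨by omega, by omega⟩ hedge
        · exact Or.inr (Or.inl h')
      · exact Or.inl h
    have hc2 : (0:ℝ) < c^2 := by positivity
    set K := (Finset.Icc 1 T).filter (fun t : ℕ => zT ≤ (t:ℝ)) with hK
    set Sst : ℕ → Fin d → Fin d → Set Ω := fun t i j =>
      {ω | |(1/(t:ℝ)) * (∑ τ ∈ Finset.Icc 1 t, x τ ω i * x τ ω j) - Sig i j| ≤ 8*c} with hSst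
    have hgmeas : ∀ (t : ℕ) (i j : Fin d), Measurable (fun ω =>
        (1/(t:ℝ)) * (∑ τ ∈ Finset.Icc 1 t, x τ ω i * x τ ω j) - Sig i j) := by
      intro t i j
      apply Measurable.sub _ measurable_const
      apply Measurable.const_mul
      apply Finset.measurable_sum
      intro τ _
      exact ((measurable_pi_apply i).comp (hxmeas τ)).mul
        ((measurable_pi_apply j).comp (hxmeas τ))
    have hSmeas : ∀ t i j, MeasurableSet (Sst t i j) := fun t i j =>
      measurableSet_le ((hgmeas t i j).abs) measurable_const
    set G := ⋂ t ∈ K, ⋂ i : Fin d, ⋂ j : Fin d, Sst t i j with hG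
    have hGmeas : MeasurableSet G := by
      apply MeasurableSet.biInter (K : Set ℕ).to_countable
      intro t _
      exact MeasurableSet.iInter (fun i => MeasurableSet.iInter (fun j => hSmeas t i j))
    have hGsub : G ⊆ {ω : Ω | ∀ t : ℕ, zT ≤ (t : ℝ) → t ≤ T →
        (fun i j => (1 / t : ℝ) * ∑ τ ∈ Finset.Icc 1 t, x τ ω i * x τ ω j)
          ∈ compatSet (spt β) (φ / Real.sqrt 2)} := by
      intro ω hω t hzt htT
      have htpos : (0:ℝ) < (t:ℝ) := lt_of_lt_of_le hzTpos hzt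
      have ht0 : t ≠ 0 := by
        rintro rfl
        simp only [Nat.cast_zero] at htpos
        exact lt_irrefl _ htpos
      have htK : t ∈ K := Finset.mem_filter.2 ⟨Finset.mem_Icc.2 ⟨by omega, htT⟩, hzt⟩
      simp only [hG, Set.mem_iInter] at hω
      have hclose : ∀ i j : Fin d, |(1/(t:ℝ)) * (∑ τ ∈ Finset.Icc 1 t, x τ ω i * x τ ω j)
          - Sig i j| ≤ 8*c := fun i j => hω t htK i j
      exact transfer (spt β) s₀ hI hs0pos φ hφ Sig _ hcompat
        (fun i j => le_trans (hclose i j) h8c)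
    have htail : ∀ t ∈ K, ∀ (i j : Fin d),
        ℙ ((Sst t i j)ᶜ) ≤ ENNReal.ofReal (2 * exp (-(8 * (t:ℝ) * c^2))) := by
      intro t htK i j
      obtain ⟨htIcc, hzt⟩ := Finset.mem_filter.1 htK
      obtain ⟨ht1, htT⟩ := Finset.mem_Icc.1 htIcc
      have htpos : (0:ℝ) < (t:ℝ) := by exact_mod_cast ht1
      set Y : (Finset.Icc 1 T : Finset ℕ) → Ω → ℝ :=
        fun τ ω => x τ.1 ω i * x τ.1 ω j - Sig i j with hY
      have hYmeas : ∀ τ, Measurable (Y τ) := fun τ =>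
        (((measurable_pi_apply i).comp (hxmeas τ.1)).mul
          ((measurable_pi_apply j).comp (hxmeas τ.1))).sub measurable_const
      have hYindep : iIndepFun Y ℙ := by
        exact hxindep.comp (fun τ (v : Fin d → ℝ) => v i * v j - Sig i j)
          (fun τ => ((measurable_pi_apply i).mul (measurable_pi_apply j)).sub measurable_const)
      have hYbdd : ∀ τ, ∀ᵐ ω ∂(ℙ : Measure Ω), |Y τ ω| ≤ 2 := by
        intro τ
        filter_upwards [hxbdd τ.1 τ.2] with ω hω
        have h1 : |x τ.1 ω i * x τ.1 ω j| ≤ 1 := by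
          rw [abs_mul]; exact mul_le_one₀ (hω i) (abs_nonneg _) (hω j)
        have h2 := hSbd i j
        calc |Y τ ω| ≤ |x τ.1 ω i * x τ.1 ω j| + |Sig i j| := abs_sub _ _
        _ ≤ 2 := by linarith
      have hYmean : ∀ τ, ∫ ω, Y τ ω ∂(ℙ : Measure Ω) = 0 := by
        intro τ
        have hintf : Integrable (fun ω => x τ.1 ω i * x τ.1 ω j) ℙ := by
          refine aux_int (((measurable_pi_apply i).comp (hxmeas τ.1)).mul
            ((measurable_pi_apply j).comp (hxmeas τ.1))) (C := 1) ?_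
          filter_upwards [hxbdd τ.1 τ.2] with ω hω
          rw [abs_mul]; exact mul_le_one₀ (hω i) (abs_nonneg _) (hω j)
        have : ∫ ω, Y τ ω ∂(ℙ : Measure Ω)
            = (∫ ω, x τ.1 ω i * x τ.1 ω j ∂(ℙ : Measure Ω)) - Sig i j := by
          rw [hY]
          rw [integral_sub hintf (integrable_const _), integral_const]
          simp [measure_univ]
        rw [this, ← hSig τ.1 τ.2 i j, sub_self]
      set st : Finset (Finset.Icc 1 T : Finset ℕ) :=
        Finset.univ.filter (fun τ => (τ:ℕ) ≤ t) with hst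
      have hbij : ∀ (f : ℕ → ℝ), ∑ τ ∈ st, f τ.1 = ∑ τ ∈ Finset.Icc 1 t, f τ := by
        intro f
        refine Finset.sum_bij (fun τ _ => τ.1) ?_ ?_ ?_ ?_
        · intro τ hτ
          have h2 := τ.2
          simp only [hst, Finset.mem_filter, Finset.mem_univ, true_and] at hτ
          simp only [Finset.mem_Icc] at h2 ⊢
          exact ⟨h2.1, hτ⟩
        · intro τ1 _ τ2 _ h
          exact Subtype.ext h
        · intro n hn
          simp only [Finset.mem_Icc] at hn
          refine ⟨⟨n, Finset.mem_Icc.2 ⟨hn.1, le_trans hn.2 htT⟩⟩, ?_, rfl⟩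
          simp only [hst, Finset.mem_filter, Finset.mem_univ, true_and]
          exact hn.2
        · intros; rfl
      have hcardst : (st.card : ℝ) = (t:ℝ) := by
        have h := hbij (fun _ => (1:ℝ))
        simp only [Finset.sum_const, nsmul_eq_mul, mul_one, Nat.card_Icc,
          Nat.add_sub_cancel] at h
        exact h
      have hsubset : (Sst t i j)ᶜ ⊆ {ω | 8 * c * st.card ≤ |∑ τ ∈ st, Y τ ω|} := by
        intro ω hω
        simp only [hSst, Set.mem_compl_iff, Set.mem_setOf_eq, not_le] at hω
        have hsum : ∑ τ ∈ st, Y τ ω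
            = (∑ τ ∈ Finset.Icc 1 t, x τ ω i * x τ ω j) - (t:ℝ) * Sig i j := by
          have h := hbij (fun τ => x τ ω i * x τ ω j - Sig i j)
          rw [show ∑ τ ∈ st, Y τ ω = ∑ τ ∈ st, (x τ.1 ω i * x τ.1 ω j - Sig i j) from rfl, h,
            Finset.sum_sub_distrib, Finset.sum_const, Nat.card_Icc, Nat.add_sub_cancel,
            nsmul_eq_mul]
        rw [Set.mem_setOf_eq, hsum, hcardst]
        have hfac : (∑ τ ∈ Finset.Icc 1 t, x τ ω i * x τ ω j) - (t:ℝ) * Sig i j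
            = (t:ℝ) * ((1/(t:ℝ)) * (∑ τ ∈ Finset.Icc 1 t, x τ ω i * x τ ω j) - Sig i j) := by
          field_simp
        rw [hfac, abs_mul, abs_of_pos htpos]
        calc 8*c*(t:ℝ) = (t:ℝ)*(8*c) := by ring
        _ ≤ (t:ℝ) * |(1/(t:ℝ)) * (∑ τ ∈ Finset.Icc 1 t, x τ ω i * x τ ω j) - Sig i j| :=
          mul_le_mul_of_nonneg_left hω.le htpos.le
      calc ℙ ((Sst t i j)ᶜ) ≤ ℙ {ω | 8*c*st.card ≤ |∑ τ ∈ st, Y τ ω|} := measure_mono hsubset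
      _ ≤ ENNReal.ofReal (2 * exp (-(8 * st.card * c^2))) :=
          hoeff_sum Y hYindep hYmeas hYbdd hYmean st hc0
      _ = ENNReal.ofReal (2 * exp (-(8 * (t:ℝ) * c^2))) := by rw [hcardst]
    have hfinU : ∀ (A : Fin d → Set Ω), ℙ (⋃ i, A i) ≤ ∑ i : Fin d, ℙ (A i) := by
      intro A
      refine le_trans (measure_iUnion_le A) ?_
      rw [tsum_fintype]
    have hGc : ℙ Gᶜ ≤ ENNReal.ofReal δ' := by
      have hsub : Gᶜ ⊆ ⋃ t ∈ K, ⋃ i : Fin d, ⋃ j : Fin d, (Sst t i j)ᶜ := by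
        rw [hG]
        simp only [Set.compl_iInter]
        exact subset_rfl
      refine le_trans (measure_mono hsub) ?_
      calc ℙ (⋃ t ∈ K, ⋃ i : Fin d, ⋃ j : Fin d, (Sst t i j)ᶜ)
          ≤ ∑ t ∈ K, ℙ (⋃ i : Fin d, ⋃ j : Fin d, (Sst t i j)ᶜ) :=
            measure_biUnion_finset_le K _
      _ ≤ ∑ t ∈ K, ∑ i : Fin d, ∑ j : Fin d, ℙ ((Sst t i j)ᶜ) := by
          refine Finset.sum_le_sum (fun t _ => ?_)
          refine le_trans (hfinU _) (Finset.sum_le_sum (fun i _ => hfinU _))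
      _ ≤ ∑ t ∈ K, ∑ i : Fin d, ∑ j : Fin d, ENNReal.ofReal (2 * exp (-(8 * (t:ℝ) * c^2))) := by
          refine Finset.sum_le_sum (fun t htK => Finset.sum_le_sum (fun i _ =>
            Finset.sum_le_sum (fun j _ => htail t htK i j)))
      _ = ∑ t ∈ K, ENNReal.ofReal ((d:ℝ)^2 * (2 * exp (-(8 * (t:ℝ) * c^2)))) := by
          refine Finset.sum_congr rfl (fun t _ => ?_)
          rw [Finset.sum_const, Finset.sum_const, Finset.card_univ, Fintype.card_fin,
            smul_smul, nsmul_eq_mul, ← ENNReal.ofReal_natCast (d*d),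
            ← ENNReal.ofReal_mul (by positivity)]
          congr 1
          push_cast
          ring
      _ ≤ ∑ t ∈ K, ENNReal.ofReal (δ'/T) := by
          refine Finset.sum_le_sum (fun t htK => ENNReal.ofReal_le_ofReal ?_)
          obtain ⟨htIcc, hzt⟩ := Finset.mem_filter.1 htK
          have h3 : 3 * Real.log d ≤ (t:ℝ) * c^2 := by
            have h1 : (3 / c ^ 2) * Real.log d ≤ (t:ℝ) := by
              refine le_trans ?_ hzt
              rw [hzT]
              exact le_max_left _ _
            rw [div_mul_eq_mul_div, div_le_iff₀ hc2] at h1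
            nlinarith [h1]
          have hlg : Real.log ((T:ℝ)^2/δ') ≤ (t:ℝ) * c^2 := by
            have h1 : (1 / c ^ 2) * Real.log ((T:ℝ) ^ 2 / δ') ≤ (t:ℝ) := by
              refine le_trans ?_ hzt
              rw [hzT]
              exact le_max_right _ _
            rw [div_mul_eq_mul_div, div_le_iff₀ hc2] at h1
            nlinarith [h1]
          exact perterm d T hd hT δ' c (t:ℝ) hδ0 hδ1 hne h3 hlg
      _ ≤ ENNReal.ofReal δ' := by
          rw [Finset.sum_const, nsmul_eq_mul]
          have hKcard : K.card ≤ T := by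
            refine le_trans (Finset.card_filter_le _ _) ?_
            rw [Nat.card_Icc]
            omega
          calc (K.card : ℝ≥0∞) * ENNReal.ofReal (δ'/T)
              ≤ (T:ℝ≥0∞) * ENNReal.ofReal (δ'/T) := by
                have : (K.card : ℝ≥0∞) ≤ (T:ℝ≥0∞) := by exact_mod_cast hKcard
                exact mul_le_mul_left this _
          _ = ENNReal.ofReal ((T:ℝ) * (δ'/T)) := by
                rw [← ENNReal.ofReal_natCast T, ← ENNReal.ofReal_mul (by positivity)]
          _ = ENNReal.ofReal δ' := by
                congr 1
                field_simp
    have hPG : (1:ℝ≥0∞) - ENNReal.ofReal δ' ≤ ℙ G := by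
      have h3 : ℙ Gᶜ = 1 - ℙ G := by
        rw [measure_compl hGmeas (measure_ne_top _ _), measure_univ]
      have h2 : ℙ G = 1 - ℙ Gᶜ := by
        rw [h3]
        exact (ENNReal.sub_sub_cancel ENNReal.one_ne_top prob_le_one).symm
      rw [h2]
      exact tsub_le_tsub_left hGc 1
    refine le_trans ?_ (le_trans hPG (measure_mono hGsub))
    rw [ENNReal.ofReal_sub 1 hδ0.le, ENNReal.ofReal_one]
end
end

section
/- Let N and d be positive integers, β, β̂ ∈ ℝ^d, and b₁,…,b_N ∈ ℝ^d be fixed contexts with ‖b_i‖_∞ ≤ 1 for all i. Let η₁,…,η_N be real random variables with E[η_i] = 0 and E[η_i²] ≤ R² for each i, set r_i = b_iᵀβ + η_i, and let a be a random index in {1,…,N}, independent of (η₁,…,η_N), with P(a = i) = π_i ≥ p > 0 for every i. Define r̂ = b̄ᵀβ̂ + (1/N)·(r_a − b_aᵀβ̂)/π_a with b̄ = (1/N)·Σ_{i=1}^N b_i, and suppose ‖β̂ − β‖₁ ≤ B. Then E[(r̂ − b̄ᵀβ)²] ≤ 3·( B² + (R² + B²)/(N·p)² ). -/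
open MeasureTheory ProbabilityTheory Real Finset Matrix

noncomputable section

/-- **Bounded second moment of the doubly-robust pseudo-reward.** With `‖b_i‖_∞ ≤ 1`,
centered errors `η_i` with `E[η_i²] ≤ R²`, rewards `r_i = b_iᵀβ + η_i`, an arm `a` drawn
independently of the errors with `P(a = i) = π_i ≥ p > 0`, pseudo-reward
`r̂ = b̄ᵀβ̂ + (1/N) (r_a - b_aᵀβ̂) / π_a`, and `‖β̂ - β‖₁ ≤ B`, one has
`E[(r̂ - b̄ᵀβ)²] ≤ 3 (B² + (R² + B²) / (N p)²)`. -/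
theorem stmt6
    {Ω : Type*} [MeasureSpace Ω] [IsProbabilityMeasure (ℙ : Measure Ω)]
    (N d : ℕ) (hN : 0 < N) (hd : 0 < d)
    (β βhat : Fin d → ℝ) (b : Fin N → Fin d → ℝ)
    (hbbdd : ∀ i j, |b i j| ≤ 1)
    (η : Fin N → Ω → ℝ) (hηmeas : ∀ i, Measurable (η i))
    (hηint : ∀ i, Integrable (η i) ℙ)
    (hηsqint : ∀ i, Integrable (fun ω => (η i ω) ^ 2) ℙ)
    (hηmean : ∀ i, ∫ ω, η i ω ∂(ℙ : Measure Ω) = 0)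
    (R : ℝ) (hηvar : ∀ i, ∫ ω, (η i ω) ^ 2 ∂(ℙ : Measure Ω) ≤ R ^ 2)
    (r : Fin N → Ω → ℝ) (hr : ∀ i ω, r i ω = b i ⬝ᵥ β + η i ω)
    (a : Ω → Fin N) (hameas : Measurable a)
    (hindep : IndepFun a (fun ω => fun i => η i ω) ℙ)
    (pr : Fin N → ℝ) (p : ℝ) (hp : 0 < p) (hprlb : ∀ i, p ≤ pr i)
    (hpr : ∀ i, (ℙ {ω | a ω = i}).toReal = pr i)
    (bbar : Fin d → ℝ) (hbbar : ∀ j, bbar j = (1 / N : ℝ) * ∑ i, b i j)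
    (rhat : Ω → ℝ)
    (hrhat : ∀ ω, rhat ω =
      bbar ⬝ᵥ βhat + (1 / N : ℝ) * (r (a ω) ω - b (a ω) ⬝ᵥ βhat) / pr (a ω))
    (B : ℝ) (hB : l1Norm (fun j => βhat j - β j) ≤ B) :
    ∫ ω, (rhat ω - bbar ⬝ᵥ β) ^ 2 ∂(ℙ : Measure Ω) ≤
      3 * (B ^ 2 + (R ^ 2 + B ^ 2) / (N * p) ^ 2) := by
  have hNpos : (0:ℝ) < (N:ℝ) := by exact_mod_cast hN
  have hpri : ∀ i, 0 < pr i := fun i => lt_of_lt_of_le hp (hprlb i)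
  have hB0 : 0 ≤ B := le_trans (Finset.sum_nonneg fun _ _ => abs_nonneg _) hB
  -- dot product bound
  have hdotB : ∀ (w : Fin d → ℝ), (∀ j, |w j| ≤ 1) → |w ⬝ᵥ βhat - w ⬝ᵥ β| ≤ B := by
    intro w hw
    have h1 : w ⬝ᵥ βhat - w ⬝ᵥ β = ∑ j, w j * (βhat j - β j) := by
      simp [dotProduct, mul_sub, Finset.sum_sub_distrib]
    rw [h1]
    calc |∑ j, w j * (βhat j - β j)| ≤ ∑ j, |w j * (βhat j - β j)| :=
          Finset.abs_sum_le_sum_abs _ _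
      _ ≤ ∑ j, |βhat j - β j| := Finset.sum_le_sum fun j _ => by
          rw [abs_mul]; exact mul_le_of_le_one_left (abs_nonneg _) (hw j)
      _ ≤ B := hB
  have hbbarbdd : ∀ j, |bbar j| ≤ 1 := by
    intro j
    rw [hbbar j, abs_mul, abs_of_pos (by positivity : (0:ℝ) < (1/N:ℝ))]
    calc (1/N:ℝ) * |∑ i, b i j| ≤ (1/N:ℝ) * ∑ i, |b i j| := by
          gcongr; exact Finset.abs_sum_le_sum_abs _ _
      _ ≤ (1/N:ℝ) * ∑ _i : Fin N, (1:ℝ) := by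
          gcongr with i; exact hbbdd i j
      _ = 1 := by simp; field_simp
  set X : ℝ := bbar ⬝ᵥ βhat - bbar ⬝ᵥ β with hXdef
  have hX : |X| ≤ B := hdotB bbar hbbarbdd
  have hYb : ∀ i, |b i ⬝ᵥ βhat - b i ⬝ᵥ β| ≤ B := fun i => hdotB (b i) (hbbdd i)
  set S : Fin N → Set Ω := fun i => a ⁻¹' {i} with hSdef
  have hS : ∀ i, MeasurableSet (S i) := fun i => hameas (measurableSet_singleton i)
  have hSeq : ∀ i, {ω | a ω = i} = S i := fun i => rfl
  set c : Fin N → ℝ := fun i => (1 / ((N:ℝ) * pr i)) ^ 2 with hcdef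
  have hc0 : ∀ i, 0 ≤ c i := fun i => by positivity
  set g : Ω → ℝ := fun ω =>
    3 * B ^ 2 + 3 * (B / ((N:ℝ) * p)) ^ 2
      + 3 * ∑ i, Set.indicator (S i) (fun ω' => c i * η i ω' ^ 2) ω with hgdef
  have hind_int : ∀ i, Integrable (Set.indicator (S i) (fun ω' => c i * η i ω' ^ 2)) ℙ := by
    intro i
    exact (((hηsqint i).const_mul (c i)).indicator (hS i))
  have hg_int : Integrable g ℙ := by
    apply Integrable.add (integrable_const _)
    exact (integrable_finset_sum _ (fun i _ => hind_int i)).const_mul 3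
  -- pointwise bound
  have hfg : ∀ ω, (rhat ω - bbar ⬝ᵥ β) ^ 2 ≤ g ω := by
    intro ω
    set Y : ℝ := -((1/N:ℝ) * (b (a ω) ⬝ᵥ βhat - b (a ω) ⬝ᵥ β) / pr (a ω)) with hYdef
    set Z : ℝ := (1/N:ℝ) * η (a ω) ω / pr (a ω) with hZdef
    have hdecomp : rhat ω - bbar ⬝ᵥ β = X + Y + Z := by
      rw [hrhat, hr, hXdef, hYdef, hZdef]
      have hne : pr (a ω) ≠ 0 := (hpri (a ω)).ne'
      field_simp
      ring
    have hY2 : Y ^ 2 ≤ (B / ((N:ℝ) * p)) ^ 2 := by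
      have habs : |Y| ≤ B / ((N:ℝ) * p) := by
        rw [hYdef, abs_neg, abs_div, abs_mul,
          abs_of_pos (by positivity : (0:ℝ) < (1/N:ℝ)),
          abs_of_pos (hpri (a ω))]
        have h1 : (1/N:ℝ) * |b (a ω) ⬝ᵥ βhat - b (a ω) ⬝ᵥ β| / pr (a ω)
            = |b (a ω) ⬝ᵥ βhat - b (a ω) ⬝ᵥ β| / ((N:ℝ) * pr (a ω)) := by
          field_simp
        rw [h1]
        exact div_le_div₀ hB0 (hYb (a ω)) (by positivity)
          (mul_le_mul_of_nonneg_left (hprlb (a ω)) hNpos.le)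
      calc Y ^ 2 = |Y| ^ 2 := (sq_abs Y).symm
        _ ≤ (B / ((N:ℝ) * p)) ^ 2 := pow_le_pow_left₀ (abs_nonneg _) habs 2
    have hX2 : X ^ 2 ≤ B ^ 2 := by
      calc X ^ 2 = |X| ^ 2 := (sq_abs X).symm
        _ ≤ B ^ 2 := pow_le_pow_left₀ (abs_nonneg _) hX 2
    have hZ2 : Z ^ 2 = ∑ i, Set.indicator (S i) (fun ω' => c i * η i ω' ^ 2) ω := by
      have hsum : (∑ i, Set.indicator (S i) (fun ω' => c i * η i ω' ^ 2) ω)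
          = c (a ω) * η (a ω) ω ^ 2 := by
        rw [Finset.sum_eq_single (a ω)]
        · simp [Set.indicator_apply, hSdef]
        · intro j _ hj
          have : ω ∉ S j := by
            simp only [hSdef, Set.mem_preimage, Set.mem_singleton_iff]
            exact fun h => hj (h ▸ rfl)
          exact Set.indicator_of_notMem this _
        · intro h; exact absurd (Finset.mem_univ _) h
      rw [hsum, hZdef]
      have hne : pr (a ω) ≠ 0 := (hpri (a ω)).ne'
      have hcv : c (a ω) = (1 / ((N:ℝ) * pr (a ω))) ^ 2 := rfl
      rw [hcv]
      field_simp
    rw [hdecomp]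
    simp only [hgdef]
    rw [← hZ2]
    clear_value X Y Z
    nlinarith [sq_nonneg (X - Y), sq_nonneg (X - Z), sq_nonneg (Y - Z)]
  have hmono : ∫ ω, (rhat ω - bbar ⬝ᵥ β) ^ 2 ∂(ℙ : Measure Ω) ≤ ∫ ω, g ω ∂(ℙ : Measure Ω) :=
    integral_mono_of_nonneg (Filter.Eventually.of_forall fun ω => sq_nonneg _)
      hg_int (Filter.Eventually.of_forall hfg)
  -- integral of indicator via independence
  have key : ∀ i, ∫ ω, Set.indicator (S i) (fun ω' => c i * η i ω' ^ 2) ω ∂(ℙ : Measure Ω)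
      = c i * (pr i * ∫ ω, η i ω ^ 2 ∂(ℙ : Measure Ω)) := by
    intro i
    have hφ : Measurable (fun x : Fin N => if x = i then (1:ℝ) else 0) :=
      measurable_from_top
    have hψ : Measurable (fun v : Fin N → ℝ => (v i) ^ 2) :=
      (measurable_pi_apply i).pow_const 2
    have hind := hindep.comp hφ hψ
    have hmul := hind.integral_mul_eq_mul_integral
      ((hφ.comp hameas).aestronglyMeasurable)
      ((hψ.comp (measurable_pi_lambda _ fun j => hηmeas j)).aestronglyMeasurable)
    have hrw : (fun ω => Set.indicator (S i) (fun ω' => c i * η i ω' ^ 2) ω)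
        = fun ω => c i * (((fun x : Fin N => if x = i then (1:ℝ) else 0) ∘ a) ω *
            ((fun v : Fin N → ℝ => (v i) ^ 2) ∘ (fun ω => fun j => η j ω)) ω) := by
      funext ω
      by_cases h : a ω = i <;>
        simp [Set.indicator_apply, hSdef, Function.comp, h]
    rw [hrw, integral_const_mul]
    have h1 : ∫ ω, (((fun x : Fin N => if x = i then (1:ℝ) else 0) ∘ a) ω *
        ((fun v : Fin N → ℝ => (v i) ^ 2) ∘ (fun ω => fun j => η j ω)) ω) ∂(ℙ : Measure Ω)
        = (∫ ω, ((fun x : Fin N => if x = i then (1:ℝ) else 0) ∘ a) ω ∂(ℙ : Measure Ω)) *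
          ∫ ω, η i ω ^ 2 ∂(ℙ : Measure Ω) := hmul
    rw [h1]
    congr 1
    have h2 : ((fun x : Fin N => if x = i then (1:ℝ) else 0) ∘ a)
        = Set.indicator (S i) (fun _ => (1:ℝ)) := by
      funext ω
      by_cases h : a ω = i <;>
        simp [Set.indicator_apply, hSdef, Function.comp, h]
    rw [h2]
    rw [show (Set.indicator (S i) (fun _ => (1:ℝ))) = Set.indicator (S i) 1 from rfl]
    rw [integral_indicator_one (hS i)]
    congr 1
    rw [← hSeq i]
    exact hpr i
  have hsumpr : ∑ i, pr i = 1 := by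
    have hdisj : Pairwise (Function.onFun Disjoint S) := by
      intro i j hij
      refine Set.disjoint_left.2 fun ω hi hj => hij ?_
      simp only [hSdef, Set.mem_preimage, Set.mem_singleton_iff] at hi hj
      rw [← hi, ← hj]
    have hU : (⋃ i, S i) = Set.univ := by
      ext ω; simp [hSdef]
    have hm := measure_iUnion (μ := (ℙ : Measure Ω)) hdisj hS
    rw [hU, measure_univ, tsum_fintype] at hm
    have := congrArg ENNReal.toReal hm
    rw [ENNReal.toReal_sum (fun i _ => measure_ne_top _ _)] at this
    simp only [ENNReal.toReal_one] at this
    rw [show (∑ i, pr i) = ∑ i, (ℙ (S i)).toReal from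
      Finset.sum_congr rfl fun i _ => ((hSeq i ▸ hpr i : (ℙ (S i)).toReal = pr i)).symm]
    exact this.symm
  -- compute integral of g
  have hg_val : ∫ ω, g ω ∂(ℙ : Measure Ω)
      = 3 * B ^ 2 + 3 * (B / ((N:ℝ) * p)) ^ 2
        + 3 * ∑ i, c i * (pr i * ∫ ω, η i ω ^ 2 ∂(ℙ : Measure Ω)) := by
    rw [hgdef]
    rw [integral_add (integrable_const _)
      ((integrable_finset_sum _ (fun i _ => hind_int i)).const_mul 3)]
    rw [integral_const]
    simp only [measure_univ, ENNReal.toReal_one, probReal_univ, one_smul]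
    congr 1
    rw [integral_const_mul, integral_finset_sum _ (fun i _ => hind_int i)]
    congr 1
    exact Finset.sum_congr rfl fun i _ => key i
  rw [hg_val] at hmono
  refine le_trans hmono ?_
  have hsumle : ∑ i, c i * (pr i * ∫ ω, η i ω ^ 2 ∂(ℙ : Measure Ω))
      ≤ R ^ 2 / ((N:ℝ) * p) ^ 2 := by
    have hstep : ∀ i, c i * (pr i * ∫ ω, η i ω ^ 2 ∂(ℙ : Measure Ω))
        ≤ pr i * R ^ 2 / ((N:ℝ) * p) ^ 2 := by
      intro i
      have hI0 : 0 ≤ ∫ ω, η i ω ^ 2 ∂(ℙ : Measure Ω) :=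
        integral_nonneg fun ω => sq_nonneg _
      have hIR : ∫ ω, η i ω ^ 2 ∂(ℙ : Measure Ω) ≤ R ^ 2 := hηvar i
      have hR0 : (0:ℝ) ≤ R ^ 2 := le_trans hI0 hIR
      have hcpr : c i * pr i ≤ pr i / ((N:ℝ) * p) ^ 2 := by
        have hpi := hpri i
        have hpl := hprlb i
        have hcv : c i = (1 / ((N:ℝ) * pr i)) ^ 2 := rfl
        have h3 : c i * pr i = 1 / ((N:ℝ) ^ 2 * pr i) := by
          rw [hcv]; field_simp
        rw [h3, div_le_div_iff₀ (by positivity) (by positivity)]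
        nlinarith [mul_le_mul hpl hpl hp.le hpi.le, sq_nonneg ((N:ℝ))]
      calc c i * (pr i * ∫ ω, η i ω ^ 2 ∂(ℙ : Measure Ω))
          ≤ c i * (pr i * R ^ 2) :=
            mul_le_mul_of_nonneg_left (mul_le_mul_of_nonneg_left hIR (hpri i).le) (hc0 i)
        _ = (c i * pr i) * R ^ 2 := by ring
        _ ≤ (pr i / ((N:ℝ) * p) ^ 2) * R ^ 2 := by gcongr
        _ = pr i * R ^ 2 / ((N:ℝ) * p) ^ 2 := by ring
    calc ∑ i, c i * (pr i * ∫ ω, η i ω ^ 2 ∂(ℙ : Measure Ω))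
        ≤ ∑ i, pr i * R ^ 2 / ((N:ℝ) * p) ^ 2 := Finset.sum_le_sum fun i _ => hstep i
      _ = (∑ i, pr i) * R ^ 2 / ((N:ℝ) * p) ^ 2 := by
          rw [← Finset.sum_div, ← Finset.sum_mul]
      _ = R ^ 2 / ((N:ℝ) * p) ^ 2 := by rw [hsumpr, one_mul]
  have hNp : (0:ℝ) < ((N:ℝ) * p) ^ 2 := by positivity
  have : 3 * B ^ 2 + 3 * (B / ((N:ℝ) * p)) ^ 2 + 3 * (R ^ 2 / ((N:ℝ) * p) ^ 2)
      = 3 * (B ^ 2 + (R ^ 2 + B ^ 2) / ((N:ℝ) * p) ^ 2) := by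
    field_simp
    ring
  linarith [hsumle]
end
end
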